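/- The compact elements of the dcpo Pom(L) are exactly the finite pomsets: K(Pom(L)) = Pom_fin(L). -/

import Mathlib

/-! ## Boolean formulae over node variables -/

inductive Form where
  | top : Form
  | bot : Form
  | conj : Form → Form → Form
  | disj : Form → Form → Form
  | neg : Form → Form
  | var : ℕ → Form

def Form.sat (v : ℕ → Bool) : Form → Prop
  | .top => True
  | .bot => False
  | .conj a b => a.sat v ∧ b.sat v
  | .disj a b => a.sat v ∨ b.sat v
  | .neg a => ¬ a.sat v
  | .var x => v x = true

def Form.vars : Form → Set ℕ
  | .top => ∅
  | .bot => ∅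
  | .conj a b => a.vars ∪ b.vars
  | .disj a b => a.vars ∪ b.vars
  | .neg a => a.vars
  | .var x => {x}

def Form.rename (f : ℕ → ℕ) : Form → Form
  | .top => .top
  | .bot => .bot
  | .conj a b => .conj (a.rename f) (b.rename f)
  | .disj a b => .disj (a.rename f) (b.rename f)
  | .neg a => .neg (a.rename f)
  | .var x => .var (f x)

/-! ## Labels: a pointed, finitely preceded dcpo -/

class LabelDCPO (L : Type) extends PartialOrder L, OrderBot L where
  directedSupExists : ∀ S : Set L, S.Nonempty → DirectedOn (· ≤ ·) S → ∃ b, IsLUB S b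
  finitelyPreceded : ∀ l : L, {l' : L | l' < l}.Finite

/-- The level of a node: length of the longest strict chain ending at it. -/
noncomputable def levOf (lt : ℕ → ℕ → Prop) (x : ℕ) : ℕ :=
  sSup {n | ∃ c : ℕ → ℕ, c n = x ∧ ∀ i < n, lt (c i) (c (i + 1))}

/-! ## Labelled partial orders with formulae -/

structure LPOF (L : Type) [LabelDCPO L] where
  N : Set ℕ
  lt : ℕ → ℕ → Prop
  lab : ℕ → L
  form : ℕ → Form
  lt_mem : ∀ {x y}, lt x y → x ∈ N ∧ y ∈ N
  lt_trans : ∀ {x y z}, lt x y → lt y z → lt x z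
  lt_irrefl : ∀ x, ¬ lt x x
  finPred : ∀ x, {y | lt y x}.Finite
  finLevel : ∀ n, {x ∈ N | levOf lt x = n}.Finite
  singleRoot : ∃! r, r ∈ N ∧ ∀ y, ¬ lt y r
  bot_maximal : ∀ x ∈ N, lab x = ⊥ → ∀ y, ¬ lt x y
  form_sat : ∀ x ∈ N, ∃ v, (form x).sat v
  form_free : ∀ x ∈ N, ∀ y ∈ (form x).vars, lt y x
  form_impl : ∀ {x y}, lt x y → ∀ v, (form y).sat v → (form x).sat v
  lab_junk : ∀ x, x ∉ N → lab x = ⊥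
  form_junk : ∀ x, x ∉ N → form x = Form.top

variable {L : Type} [LabelDCPO L]

/-- The set of ⊥-labelled nodes. -/
def LPOF.Bot (α : LPOF L) : Set ℕ := {x ∈ α.N | α.lab x = ⊥}

/-- Strict successors of a set of nodes. -/
def LPOF.succPlus (α : LPOF L) (X : Set ℕ) : Set ℕ := {y | ∃ x ∈ X, α.lt x y}

/-- Immediate successors of a node. -/
def LPOF.succs (α : LPOF L) (x : ℕ) : Set ℕ :=
  {y | α.lt x y ∧ ¬ ∃ z, α.lt x z ∧ α.lt z y}

/-- The order ⊑ on LPOFs. -/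
def LPOF.le (α β : LPOF L) : Prop :=
  α.N ⊆ β.N ∧
  (∀ x ∈ α.N, ∀ y, β.lt y x → y ∈ α.N) ∧
  (∀ x y, α.lt x y ↔ (β.lt x y ∧ x ∈ α.N ∧ y ∈ α.N)) ∧
  (∀ x ∈ α.N, α.lab x ≤ β.lab x) ∧
  (∀ x ∈ α.N, α.form x = β.form x) ∧
  (∀ x ∈ α.N, α.succs x = β.succs x \ β.succPlus α.Bot)

/-! ## Generic suprema w.r.t. a relation -/

def isUB {X : Type*} (le : X → X → Prop) (D : Set X) (b : X) : Prop :=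
  ∀ a ∈ D, le a b

def isSup {X : Type*} (le : X → X → Prop) (D : Set X) (b : X) : Prop :=
  isUB le D b ∧ ∀ c, isUB le D c → le b c

/-! ## Isomorphism and pomsets with formulae -/

def LPOF.iso (α β : LPOF L) : Prop :=
  ∃ f : ℕ → ℕ, Set.BijOn f α.N β.N ∧
    (∀ x ∈ α.N, ∀ y ∈ α.N, (α.lt x y ↔ β.lt (f x) (f y))) ∧
    (∀ x ∈ α.N, β.lab (f x) = α.lab x) ∧
    (∀ x ∈ α.N, β.form (f x) = (α.form x).rename f)

def isoClass (α : LPOF L) : Set (LPOF L) := {β | α.iso β}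

def Pom (L : Type) [LabelDCPO L] : Type := {A : Set (LPOF L) // ∃ α, A = isoClass α}

def pomLe (A B : Pom L) : Prop := ∀ α ∈ A.1, ∃ β ∈ B.1, LPOF.le α β

def PomFinite (A : Pom L) : Prop := ∀ α ∈ A.1, α.N.Finite

/-! ## The singleton ⊥ LPOF and the bottom pomset -/

def botLPOF (x₀ : ℕ) : LPOF L where
  N := {x₀}
  lt _ _ := False
  lab _ := ⊥
  form _ := Form.top
  lt_mem h := h.elim
  lt_trans h _ := h.elim
  lt_irrefl _ h := h
  finPred _ := Set.finite_empty.subset (by intro y hy; exact hy.elim)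
  finLevel _ := (Set.finite_singleton x₀).subset (fun y hy => hy.1)
  singleRoot := ⟨x₀, ⟨rfl, fun _ h => h⟩, fun r hr => hr.1⟩
  bot_maximal _ _ _ _ h := h
  form_sat _ _ := ⟨fun _ => true, by simp [Form.sat]⟩
  form_free _ _ y hy := by simp [Form.vars] at hy
  form_impl h := h.elim
  lab_junk _ _ := rfl
  form_junk _ _ := rfl

def botPom : Pom L := ⟨isoClass (botLPOF 0), ⟨botLPOF 0, rfl⟩⟩

/-! ## Stuck formulae, extensible nodes, branches (semantically) -/

def stuckSat (α : LPOF L) (v : ℕ → Bool) : Prop :=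
  ∃ x ∈ α.N, α.lab x = ⊥ ∧ (α.form x).sat v

def extens (α : LPOF L) : Set ℕ :=
  {x ∈ α.N | ¬ ∀ v, (α.form x).sat v → stuckSat α v}

def branchSat (α : LPOF L) (S : Set ℕ) (v : ℕ → Bool) : Prop :=
  ∀ x ∈ S, (α.form x).sat v

def IsBranch (α : LPOF L) (S : Set ℕ) : Prop :=
  S.Nonempty ∧ S ⊆ extens α ∧
  (∀ v, branchSat α S v → ¬ stuckSat α v) ∧
  (∀ T, S ⊂ T → T ⊆ extens α → ¬ ∃ v, branchSat α T v)

def brSet (α : LPOF L) : Set ((ℕ → Bool) → Prop) :=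
  {p | ∃ S, IsBranch α S ∧ p = branchSat α S}

/-! ## Truncation (relationally) -/

def IsTrunc (α : LPOF L) (n : ℕ) (β : LPOF L) : Prop :=
  β.N = {x ∈ α.N | levOf α.lt x ≤ n} ∧
  (∀ x y, β.lt x y ↔ (α.lt x y ∧ x ∈ β.N ∧ y ∈ β.N)) ∧
  (∀ x ∈ β.N, (levOf α.lt x < n → β.lab x = α.lab x) ∧
    (levOf α.lt x = n → β.lab x = ⊥)) ∧
  (∀ x ∈ β.N, β.form x = α.form x)

/-! ## Guarded choice (relationally) -/

def IsGuard (x₀ : ℕ) (ℓ : L) (α β γ : LPOF L) : Prop :=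
  γ.N = insert x₀ (α.N ∪ β.N) ∧
  (∀ a b, γ.lt a b ↔ (α.lt a b ∨ β.lt a b ∨ (a = x₀ ∧ b ∈ α.N ∪ β.N))) ∧
  γ.lab x₀ = ℓ ∧
  (∀ y ∈ α.N, γ.lab y = α.lab y) ∧
  (∀ y ∈ β.N, γ.lab y = β.lab y) ∧
  γ.form x₀ = Form.top ∧
  (∀ y ∈ α.N, γ.form y = Form.conj (α.form y) (Form.var x₀)) ∧
  (∀ y ∈ β.N, γ.form y = Form.conj (β.form y) (Form.neg (Form.var x₀)))

def setLe (A B : Set (LPOF L)) : Prop := ∀ α ∈ A, ∃ β ∈ B, LPOF.le α β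

def guardSet (ℓ : L) (A B : Set (LPOF L)) : Set (LPOF L) :=
  {γ | ∃ x₀ α β, α ∈ A ∧ β ∈ B ∧ Disjoint α.N β.N ∧ x₀ ∉ α.N ∧ x₀ ∉ β.N ∧
    IsGuard x₀ ℓ α β γ}

/-! ## Sequential composition (relationally) -/

def CopyFn (α β : LPOF L) (f : Set ℕ → LPOF L) : Prop :=
  ∀ S, IsBranch α S →
    β.iso (f S) ∧ Disjoint (f S).N α.N ∧
    ∀ S', IsBranch α S' → S ≠ S' → Disjoint (f S).N (f S').N

def IsSeq (α β : LPOF L) (f : Set ℕ → LPOF L) (γ : LPOF L) : Prop :=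
  (γ.N = α.N ∪ ⋃ S ∈ {S : Set ℕ | IsBranch α S}, (f S).N) ∧
  (∀ a b, γ.lt a b ↔ (α.lt a b ∨ ∃ S, IsBranch α S ∧
    ((f S).lt a b ∨
      (a ∈ α.N ∧ (∀ v, branchSat α S v → (α.form a).sat v) ∧ b ∈ (f S).N)))) ∧
  (∀ x ∈ α.N, γ.lab x = α.lab x ∧ γ.form x = α.form x) ∧
  (∀ S, IsBranch α S → ∀ x ∈ (f S).N,
    γ.lab x = (f S).lab x ∧
    ∀ v, (γ.form x).sat v ↔ (((f S).form x).sat v ∧ branchSat α S v))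

def seqSet (A B : Set (LPOF L)) : Set (LPOF L) :=
  {γ | ∃ α ∈ A, ∃ β ∈ B, ∃ f, CopyFn α β f ∧ IsSeq α β f γ}

/-! ## Way-below and compactness in Pom(L) -/

def wayBelow (A B : Pom L) : Prop :=
  ∀ D : Set (Pom L), D.Nonempty → DirectedOn pomLe D →
    ∀ S, isSup pomLe D S → pomLe B S → ∃ C ∈ D, pomLe A C

def pomCompact (A : Pom L) : Prop := wayBelow A A


/-! ### Auxiliary: Form lemmas -/

lemma Form.rename_comp (f g : ℕ → ℕ) : ∀ φ : Form, (φ.rename f).rename g = φ.rename (g ∘ f)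
  | .top => rfl
  | .bot => rfl
  | .conj a b => by
      simp only [Form.rename, Form.rename_comp f g a, Form.rename_comp f g b]
  | .disj a b => by
      simp only [Form.rename, Form.rename_comp f g a, Form.rename_comp f g b]
  | .neg a => by simp only [Form.rename, Form.rename_comp f g a]
  | .var x => rfl

lemma Form.rename_congr {f g : ℕ → ℕ} :
    ∀ φ : Form, (∀ x ∈ φ.vars, f x = g x) → φ.rename f = φ.rename g
  | .top, _ => rfl
  | .bot, _ => rfl
  | .conj a b, h => by
      simp only [Form.rename]
      rw [Form.rename_congr a fun x hx => h x (Set.mem_union_left _ hx),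
        Form.rename_congr b fun x hx => h x (Set.mem_union_right _ hx)]
  | .disj a b, h => by
      simp only [Form.rename]
      rw [Form.rename_congr a fun x hx => h x (Set.mem_union_left _ hx),
        Form.rename_congr b fun x hx => h x (Set.mem_union_right _ hx)]
  | .neg a, h => by
      simp only [Form.rename]
      rw [Form.rename_congr a h]
  | .var x, h => by
      simp only [Form.rename, h x rfl]

lemma Form.rename_id : ∀ φ : Form, φ.rename id = φ
  | .top => rfl
  | .bot => rfl
  | .conj a b => by simp only [Form.rename, Form.rename_id a, Form.rename_id b]
  | .disj a b => by simp only [Form.rename, Form.rename_id a, Form.rename_id b]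
  | .neg a => by simp only [Form.rename, Form.rename_id a]
  | .var x => rfl

lemma Form.rename_eq_id {f : ℕ → ℕ} (φ : Form) (h : ∀ x ∈ φ.vars, f x = x) :
    φ.rename f = φ := by
  rw [Form.rename_congr (g := id) φ h, Form.rename_id]

lemma Form.vars_rename (f : ℕ → ℕ) : ∀ φ : Form, (φ.rename f).vars = f '' φ.vars
  | .top => by simp [Form.rename, Form.vars]
  | .bot => by simp [Form.rename, Form.vars]
  | .conj a b => by
      simp only [Form.rename, Form.vars, Form.vars_rename f a, Form.vars_rename f b,
        Set.image_union]
  | .disj a b => by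
      simp only [Form.rename, Form.vars, Form.vars_rename f a, Form.vars_rename f b,
        Set.image_union]
  | .neg a => by simp only [Form.rename, Form.vars, Form.vars_rename f a]
  | .var x => by simp [Form.rename, Form.vars]

lemma Form.sat_rename (f : ℕ → ℕ) (v : ℕ → Bool) :
    ∀ φ : Form, (φ.rename f).sat v ↔ φ.sat (fun x => v (f x))
  | .top => Iff.rfl
  | .bot => Iff.rfl
  | .conj a b => by
      simp only [Form.rename, Form.sat, Form.sat_rename f v a, Form.sat_rename f v b]
  | .disj a b => by
      simp only [Form.rename, Form.sat, Form.sat_rename f v a, Form.sat_rename f v b]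
  | .neg a => by simp only [Form.rename, Form.sat, Form.sat_rename f v a]
  | .var x => Iff.rfl

/-! ### Auxiliary: chains and `levOf` -/

/-- The set of chain-lengths ending at `x`. -/
def levSet (lt : ℕ → ℕ → Prop) (x : ℕ) : Set ℕ :=
  {n | ∃ c : ℕ → ℕ, c n = x ∧ ∀ i < n, lt (c i) (c (i + 1))}

lemma levOf_eq_sSup (lt : ℕ → ℕ → Prop) (x : ℕ) : levOf lt x = sSup (levSet lt x) := rfl

lemma zero_mem_levSet (lt : ℕ → ℕ → Prop) (x : ℕ) : 0 ∈ levSet lt x :=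
  ⟨fun _ => x, rfl, fun i hi => absurd hi (Nat.not_lt_zero i)⟩

lemma levSet_nonempty (lt : ℕ → ℕ → Prop) (x : ℕ) : (levSet lt x).Nonempty :=
  ⟨0, zero_mem_levSet lt x⟩

/-- elements strictly before the end of a chain are `lt` the later elements -/
lemma chain_lt_of_lt (lt : ℕ → ℕ → Prop)
    (htrans : ∀ x y z, lt x y → lt y z → lt x z)
    (c : ℕ → ℕ) (n : ℕ) (hc : ∀ i < n, lt (c i) (c (i + 1))) :
    ∀ i j, i < j → j ≤ n → lt (c i) (c j) := by
  intro i j hij hjn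
  induction j with
  | zero => exact absurd hij (Nat.not_lt_zero i)
  | succ k ih =>
      rcases Nat.lt_succ_iff_lt_or_eq.mp hij with h | h
      · exact htrans _ _ _ (ih h (le_trans (Nat.le_succ k) hjn)) (hc k (Nat.lt_of_lt_of_le (Nat.lt_succ_self k) hjn))
      · subst h; exact hc i (Nat.lt_of_lt_of_le (Nat.lt_succ_self i) hjn)
namespace LPOF

variable {L : Type} [LabelDCPO L]

lemma levSet_bddAbove (α : LPOF L) (x : ℕ) : BddAbove (levSet α.lt x) := by
  classical
  refine ⟨(α.finPred x).toFinset.card, ?_⟩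
  rintro n ⟨c, hcn, hc⟩
  -- the first n elements of the chain are distinct predecessors of x
  have hmem : ∀ i < n, c i ∈ (α.finPred x).toFinset := by
    intro i hi
    rw [Set.Finite.mem_toFinset]
    have := chain_lt_of_lt α.lt (fun _ _ _ h1 h2 => α.lt_trans h1 h2) c n hc i n hi le_rfl
    rw [hcn] at this; exact this
  have hinj : ∀ i < n, ∀ j < n, c i = c j → i = j := by
    intro i hi j hj hij
    by_contra hne
    rcases Nat.lt_or_ge i j with h | h
    · have := chain_lt_of_lt α.lt (fun _ _ _ h1 h2 => α.lt_trans h1 h2) c n hc i j h (le_of_lt hj)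
      rw [hij] at this; exact α.lt_irrefl _ this
    · rcases Nat.lt_or_ge j i with h' | h'
      · have := chain_lt_of_lt α.lt (fun _ _ _ h1 h2 => α.lt_trans h1 h2) c n hc j i h' (le_of_lt hi)
        rw [hij] at this; exact α.lt_irrefl _ this
      · exact hne (le_antisymm h' h)
  calc n = (Finset.range n).card := (Finset.card_range n).symm
    _ ≤ (α.finPred x).toFinset.card := by
        apply Finset.card_le_card_of_injOn c
        · intro i hi; exact hmem i (Finset.mem_range.mp hi)
        · intro i hi j hj hij
          exact hinj i (Finset.mem_range.mp hi) j (Finset.mem_range.mp hj) hij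

lemma levOf_mem_levSet (α : LPOF L) (x : ℕ) : levOf α.lt x ∈ levSet α.lt x :=
  Nat.sSup_mem (levSet_nonempty _ _) (α.levSet_bddAbove x)

lemma le_levOf (α : LPOF L) {x n : ℕ} (h : n ∈ levSet α.lt x) : n ≤ levOf α.lt x :=
  le_csSup (α.levSet_bddAbove x) h

lemma levOf_lt_levOf (α : LPOF L) {x y : ℕ} (h : α.lt x y) :
    levOf α.lt x < levOf α.lt y := by
  obtain ⟨c, hcn, hc⟩ := α.levOf_mem_levSet x
  set m := levOf α.lt x with hm
  have : m + 1 ∈ levSet α.lt y := by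
    refine ⟨fun i => if i ≤ m then c i else y, by simp, ?_⟩
    intro i hi
    show α.lt (if i ≤ m then c i else y) (if i + 1 ≤ m then c (i + 1) else y)
    rcases Nat.lt_or_ge i m with h' | h'
    · rw [if_pos (Nat.le_of_lt h'), if_pos (Nat.succ_le_of_lt h')]
      exact hc i h'
    · have hi' : i = m := le_antisymm (Nat.lt_succ_iff.mp hi) h'
      rw [if_pos (le_of_eq hi'), if_neg (by omega : ¬ i + 1 ≤ m), hi', hcn]
      exact h
  exact Nat.lt_of_lt_of_le (Nat.lt_succ_self m) (α.le_levOf this)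

/-- a maximal realizing chain is graded: the `i`-th element has level `i`. -/
lemma levOf_chain_grade (α : LPOF L) {x : ℕ} {c : ℕ → ℕ}
    (hcn : c (levOf α.lt x) = x) (hc : ∀ i < levOf α.lt x, α.lt (c i) (c (i + 1))) :
    ∀ i ≤ levOf α.lt x, levOf α.lt (c i) = i := by
  set m := levOf α.lt x with hm
  have hge : ∀ i ≤ m, i ≤ levOf α.lt (c i) := by
    intro i him
    apply α.le_levOf
    exact ⟨c, rfl, fun j hj => hc j (lt_of_lt_of_le hj him)⟩
  have hle : ∀ d i, i + d = m → levOf α.lt (c i) ≤ i := by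
    intro d
    induction d with
    | zero => intro i hi; simp only [Nat.add_zero] at hi; subst hi; rw [hcn]
    | succ k ih =>
        intro i hi
        have h1 : α.lt (c i) (c (i + 1)) := hc i (by omega)
        have h2 : levOf α.lt (c (i+1)) ≤ i + 1 := ih (i+1) (by omega)
        have := α.levOf_lt_levOf h1
        omega
  intro i him
  exact le_antisymm (hle (m - i) i (by omega)) (hge i him)

/-- every node of positive level has a predecessor of each smaller level. -/
lemma exists_pred_of_lt_levOf (α : LPOF L) {x n : ℕ} (h : n < levOf α.lt x) :
    ∃ z, α.lt z x ∧ levOf α.lt z = n := by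
  obtain ⟨c, hcn, hc⟩ := α.levOf_mem_levSet x
  refine ⟨c n, ?_, α.levOf_chain_grade hcn hc n (le_of_lt h)⟩
  have := chain_lt_of_lt α.lt (fun _ _ _ h1 h2 => α.lt_trans h1 h2) c (levOf α.lt x) hc n (levOf α.lt x) h le_rfl
  rwa [hcn] at this

/-- level is computed identically in a down-closed restriction. -/
lemma levOf_restrict (α : LPOF L) {P : Set ℕ} {lt' : ℕ → ℕ → Prop}
    (hdc : ∀ x ∈ P, ∀ y, α.lt y x → y ∈ P)
    (hiff : ∀ x y, lt' x y ↔ (α.lt x y ∧ x ∈ P ∧ y ∈ P)) :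
    ∀ x ∈ P, levOf lt' x = levOf α.lt x := by
  intro x hx
  have hset : levSet lt' x = levSet α.lt x := by
    ext n
    constructor
    · rintro ⟨c, hcn, hc⟩
      exact ⟨c, hcn, fun i hi => ((hiff _ _).mp (hc i hi)).1⟩
    · rintro ⟨c, hcn, hc⟩
      have hmem : ∀ i ≤ n, c i ∈ P := by
        intro i hin
        rcases Nat.lt_or_ge i n with h | h
        · apply hdc x hx
          have := chain_lt_of_lt α.lt (fun _ _ _ h1 h2 => α.lt_trans h1 h2) c n hc i n h le_rfl
          rwa [hcn] at this
        · have : i = n := le_antisymm hin h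
          subst this; rwa [hcn]
      exact ⟨c, hcn, fun i hi => (hiff _ _).mpr
        ⟨hc i hi, hmem i (le_of_lt hi), hmem (i+1) (Nat.succ_le_of_lt hi)⟩⟩
  unfold levOf
  rw [show {n | ∃ c : ℕ → ℕ, c n = x ∧ ∀ i < n, lt' (c i) (c (i + 1))} = levSet lt' x from rfl,
    hset]
  rfl

/-! ### well-founded induction on predecessors -/

lemma predCard_lt (α : LPOF L) {x y : ℕ} (h : α.lt y x) :
    (α.finPred y).toFinset.card < (α.finPred x).toFinset.card := by
  classical
  apply Finset.card_lt_card
  rw [Finset.ssubset_iff_of_subset]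
  · refine ⟨y, ?_, ?_⟩
    · rw [Set.Finite.mem_toFinset]; exact h
    · rw [Set.Finite.mem_toFinset]; exact fun hy => α.lt_irrefl y hy
  · intro z hz
    rw [Set.Finite.mem_toFinset] at hz ⊢
    exact α.lt_trans hz h

lemma lt_induction (α : LPOF L) (P : ℕ → Prop)
    (h : ∀ x, (∀ y, α.lt y x → P y) → P x) : ∀ x, P x := by
  intro x
  generalize hn : (α.finPred x).toFinset.card = n
  induction n using Nat.strong_induction_on generalizing x with
  | _ n ih =>
      subst hn
      exact h x (fun y hy => ih _ (α.predCard_lt hy) y rfl)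

/-! ### the root -/

noncomputable def root (α : LPOF L) : ℕ := α.singleRoot.choose

lemma root_mem (α : LPOF L) : α.root ∈ α.N := α.singleRoot.choose_spec.1.1

lemma root_nopred (α : LPOF L) : ∀ y, ¬ α.lt y α.root := α.singleRoot.choose_spec.1.2

lemma root_unique (α : LPOF L) {x : ℕ} (hx : x ∈ α.N) (h : ∀ y, ¬ α.lt y x) :
    x = α.root := α.singleRoot.choose_spec.2 x ⟨hx, h⟩

lemma root_or_root_lt (α : LPOF L) : ∀ x ∈ α.N, x = α.root ∨ α.lt α.root x := by
  intro x
  induction x using α.lt_induction with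
  | _ x ih =>
      intro hx
      by_cases h : ∀ y, ¬ α.lt y x
      · exact Or.inl (α.root_unique hx h)
      · push_neg at h
        obtain ⟨y, hy⟩ := h
        rcases ih y hy ((α.lt_mem hy).1) with h' | h'
        · subst h'; exact Or.inr hy
        · exact Or.inr (α.lt_trans h' hy)

end LPOF
namespace LPOF

variable {L : Type} [LabelDCPO L]

lemma succs_lt {α : LPOF L} {x y : ℕ} (h : y ∈ α.succs x) : α.lt x y := h.1

lemma succs_subset_N {α : LPOF L} {x : ℕ} : α.succs x ⊆ α.N :=
  fun _ h => (α.lt_mem h.1).2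

lemma Bot_subset_N {α : LPOF L} : α.Bot ⊆ α.N := fun _ h => h.1

lemma Bot_maximal {α : LPOF L} {x : ℕ} (h : x ∈ α.Bot) : ∀ y, ¬ α.lt x y :=
  α.bot_maximal x h.1 h.2

lemma succPlus_Bot_self (α : LPOF L) : α.succPlus α.Bot = ∅ := by
  ext y
  simp only [succPlus, Set.mem_setOf_eq, Set.mem_empty_iff_false, iff_false, not_exists]
  rintro z ⟨hz, hlt⟩
  exact Bot_maximal hz y hlt

/-- between any related pair there is an immediate successor of the lower one. -/
lemma exists_succs_between (α : LPOF L) {a w : ℕ} (h : α.lt a w) :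
    ∃ v, v ∈ α.succs a ∧ (v = w ∨ α.lt v w) := by
  classical
  set S : Set ℕ := {z | α.lt a z ∧ (z = w ∨ α.lt z w)} with hS
  have hfin : S.Finite := by
    apply Set.Finite.subset ((α.finPred w).insert w)
    rintro z ⟨_, hz2⟩
    rcases hz2 with h' | h'
    · exact Set.mem_insert_iff.mpr (Or.inl h')
    · exact Set.mem_insert_iff.mpr (Or.inr h')
  have hne : S.Nonempty := ⟨w, h, Or.inl rfl⟩
  obtain ⟨v, hvS, hvmin⟩ := Set.Finite.exists_minimalFor (levOf α.lt) S hfin hne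
  refine ⟨v, ⟨hvS.1, ?_⟩, hvS.2⟩
  rintro ⟨z, hz1, hz2⟩
  have hzS : z ∈ S := by
    refine ⟨hz1, ?_⟩
    rcases hvS.2 with h' | h'
    · exact Or.inr (h' ▸ hz2)
    · exact Or.inr (α.lt_trans hz2 h')
  have hlt := α.levOf_lt_levOf hz2
  have := hvmin hzS (le_of_lt hlt)
  omega

/-- every non-minimal node is an immediate successor of something. -/
lemma exists_mem_succs (α : LPOF L) {w y : ℕ} (h : α.lt y w) :
    ∃ v, w ∈ α.succs v := by
  classical
  obtain ⟨v, hv, hvmax⟩ := Set.Finite.exists_maximalFor (levOf α.lt)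
    {z | α.lt z w} (α.finPred w) ⟨y, h⟩
  refine ⟨v, hv, ?_⟩
  rintro ⟨z, hz1, hz2⟩
  have : z ∈ {z | α.lt z w} := hz2
  have hlt := α.levOf_lt_levOf hz1
  have := hvmax this (le_of_lt hlt)
  omega

/-! ### Structure-preserving embeddings -/

structure GoodEmb (α γ : LPOF L) (h : ℕ → ℕ) : Prop where
  inj : Set.InjOn h α.N
  maps : Set.MapsTo h α.N γ.N
  ltIff : ∀ x ∈ α.N, ∀ y ∈ α.N, (α.lt x y ↔ γ.lt (h x) (h y))
  dc : ∀ x ∈ α.N, ∀ w, γ.lt w (h x) → ∃ u ∈ α.N, h u = w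
  lab : ∀ x ∈ α.N, α.lab x ≤ γ.lab (h x)
  form : ∀ x ∈ α.N, γ.form (h x) = (α.form x).rename h
  succs : ∀ x ∈ α.N, h '' (α.succs x) = γ.succs (h x) \ γ.succPlus (h '' α.Bot)

namespace GoodEmb

variable {α β γ : LPOF L} {f g : ℕ → ℕ}

lemma lev_eq (hf : GoodEmb α γ f) : ∀ x ∈ α.N, levOf γ.lt (f x) = levOf α.lt x := by
  intro x hx
  apply le_antisymm
  · -- pull back a chain
    obtain ⟨c, hcn, hc⟩ := γ.levOf_mem_levSet (f x)
    set k := levOf γ.lt (f x) with hk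
    -- each element of the chain is in the image
    have him : ∀ i < k, ∃ u ∈ α.N, f u = c i := by
      intro i hi
      apply hf.dc x hx
      have := chain_lt_of_lt γ.lt (fun _ _ _ h1 h2 => γ.lt_trans h1 h2) c k hc i k hi le_rfl
      rwa [hcn] at this
    classical
    set u : ℕ → ℕ := fun i => if i = k then x else if hi : i < k ∧ ∃ v ∈ α.N, f v = c i
      then (hi.2).choose else x with hu
    have humem : ∀ i ≤ k, u i ∈ α.N ∧ f (u i) = c i := by
      intro i hik
      rcases Nat.lt_or_ge i k with h' | h'
      · have hex := him i h'
        have hne : i ≠ k := Nat.ne_of_lt h'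
        simp only [hu, if_neg hne, dif_pos (And.intro h' hex)]
        exact ⟨(hex.choose_spec).1, (hex.choose_spec).2⟩
      · have : i = k := le_antisymm hik h'
        subst this
        simp only [hu, if_pos rfl]
        exact ⟨hx, hcn.symm⟩
    apply α.le_levOf
    refine ⟨u, ?_, ?_⟩
    · simp only [hu, if_pos rfl]
    · intro i hi
      have h1 := humem i (le_of_lt hi)
      have h2 := humem (i+1) (Nat.succ_le_of_lt hi)
      apply (hf.ltIff _ h1.1 _ h2.1).mpr
      rw [h1.2, h2.2]
      exact hc i hi
  · obtain ⟨c, hcn, hc⟩ := α.levOf_mem_levSet x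
    set m := levOf α.lt x with hm
    have hmem : ∀ i ≤ m, c i ∈ α.N := by
      intro i hik
      rcases Nat.lt_or_ge i m with h' | h'
      · exact (α.lt_mem (hc i h')).1
      · have : i = m := le_antisymm hik h'
        subst this; rw [hcn]; exact hx
    apply γ.le_levOf
    refine ⟨fun i => f (c i), by show f (c m) = f x; rw [hcn], ?_⟩
    intro i hi
    exact (hf.ltIff _ (hmem i (le_of_lt hi)) _ (hmem (i+1) (Nat.succ_le_of_lt hi))).mp
      (hc i hi)

lemma root_eq (hf : GoodEmb α γ f) : f α.root = γ.root := by
  apply γ.root_unique (hf.maps α.root_mem)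
  intro w hw
  obtain ⟨u, hu, rfl⟩ := hf.dc _ α.root_mem w hw
  exact α.root_nopred u ((hf.ltIff _ hu _ α.root_mem).mpr hw)

/-- everything in the target not in the image lies above the image of a ⊥-node. -/
lemma growth (hf : GoodEmb α γ f) :
    ∀ w ∈ γ.N, (∀ u ∈ α.N, f u ≠ w) → ∃ z ∈ α.Bot, γ.lt (f z) w := by
  intro w
  induction w using γ.lt_induction with
  | _ w ih =>
      intro hw hnim
      by_cases hpred : ∃ y, γ.lt y w
      · obtain ⟨y, hy⟩ := hpred
        obtain ⟨v, hv⟩ := γ.exists_mem_succs hy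
        by_cases hvim : ∃ u ∈ α.N, f u = v
        · obtain ⟨u, hu, rfl⟩ := hvim
          have := hf.succs u hu
          have hw' : w ∈ γ.succs (f u) := hv
          by_cases hws : w ∈ f '' (α.succs u)
          · obtain ⟨s, hs, rfl⟩ := hws
            exact absurd rfl (hnim s (succs_subset_N hs))
          · have : w ∈ γ.succPlus (f '' α.Bot) := by
              by_contra hcon
              exact hws (this ▸ Set.mem_diff_of_mem hw' hcon)
            obtain ⟨z', ⟨z, hz, rfl⟩, hzlt⟩ := this
            exact ⟨z, hz, hzlt⟩
        · push_neg at hvim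
          have hvN : v ∈ γ.N := (γ.lt_mem (succs_lt hv)).1
          obtain ⟨z, hz, hzlt⟩ := ih v (succs_lt hv) hvN hvim
          exact ⟨z, hz, γ.lt_trans hzlt (succs_lt hv)⟩
      · push_neg at hpred
        have : w = γ.root := γ.root_unique hw hpred
        subst this
        exact absurd (hf.root_eq) (hnim α.root α.root_mem)

lemma comp (hf : GoodEmb α β f) (hg : GoodEmb β γ g) : GoodEmb α γ (g ∘ f) where
  inj := hg.inj.comp hf.inj hf.maps
  maps := hg.maps.comp hf.maps
  ltIff := fun x hx y hy =>
    (hf.ltIff x hx y hy).trans (hg.ltIff _ (hf.maps hx) _ (hf.maps hy))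
  dc := by
    intro x hx w hw
    obtain ⟨v, hv, rfl⟩ := hg.dc _ (hf.maps hx) w hw
    have : β.lt v (f x) := (hg.ltIff _ hv _ (hf.maps hx)).mpr hw
    obtain ⟨u, hu, rfl⟩ := hf.dc x hx v this
    exact ⟨u, hu, rfl⟩
  lab := fun x hx => le_trans (hf.lab x hx) (hg.lab _ (hf.maps hx))
  form := by
    intro x hx
    show γ.form (g (f x)) = _
    rw [hg.form _ (hf.maps hx), hf.form x hx, Form.rename_comp]
  succs := by
    intro x hx
    have A := hf.succs x hx
    have B := hg.succs _ (hf.maps hx)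
    ext w
    constructor
    · rintro ⟨y, hy, rfl⟩
      have hyN : y ∈ α.N := succs_subset_N hy
      have h1 : f y ∈ β.succs (f x) \ β.succPlus (f '' α.Bot) := by
        rw [← A]; exact ⟨y, hy, rfl⟩
      have h2 : g (f y) ∈ γ.succs (g (f x)) \ γ.succPlus (g '' β.Bot) := by
        rw [← B]; exact ⟨f y, h1.1, rfl⟩
      refine ⟨h2.1, ?_⟩
      rintro ⟨z', ⟨z, hz, rfl⟩, hzlt⟩
      have hzN : z ∈ α.N := Bot_subset_N hz
      have : β.lt (f z) (f y) :=
        (hg.ltIff _ (hf.maps hzN) _ (hf.maps hyN)).mpr hzlt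
      exact h1.2 ⟨f z, ⟨z, hz, rfl⟩, this⟩
    · rintro ⟨hw1, hw2⟩
      have hwg : w ∉ γ.succPlus (g '' β.Bot) := by
        rintro ⟨z', ⟨z, hz, rfl⟩, hzlt⟩
        by_cases hzim : ∃ u ∈ α.N, f u = z
        · obtain ⟨u, hu, rfl⟩ := hzim
          have : α.lab u = ⊥ := le_bot_iff.mp (hz.2 ▸ hf.lab u hu)
          exact hw2 ⟨g (f u), ⟨u, ⟨hu, this⟩, rfl⟩, hzlt⟩
        · push_neg at hzim
          obtain ⟨b, hb, hblt⟩ := hf.growth z (Bot_subset_N hz) hzim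
          have : γ.lt (g (f b)) (g z) :=
            (hg.ltIff _ (hf.maps (Bot_subset_N hb)) _ (Bot_subset_N hz)).mp hblt
          exact hw2 ⟨g (f b), ⟨b, hb, rfl⟩, γ.lt_trans this hzlt⟩
      have : w ∈ g '' (β.succs (f x)) := by rw [B]; exact ⟨hw1, hwg⟩
      obtain ⟨v, hv, rfl⟩ := this
      have hvN : v ∈ β.N := succs_subset_N hv
      have hvf : v ∉ β.succPlus (f '' α.Bot) := by
        rintro ⟨z', ⟨b, hb, rfl⟩, hblt⟩
        have : γ.lt (g (f b)) (g v) :=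
          (hg.ltIff _ (hf.maps (Bot_subset_N hb)) _ hvN).mp hblt
        exact hw2 ⟨g (f b), ⟨b, hb, rfl⟩, this⟩
      have : v ∈ f '' (α.succs x) := by rw [A]; exact ⟨hv, hvf⟩
      obtain ⟨u, hu, rfl⟩ := this
      exact ⟨u, hu, rfl⟩

lemma of_le (h : α.le β) : GoodEmb α β id where
  inj := fun x _ y _ hxy => hxy
  maps := fun x hx => h.1 hx
  ltIff := fun x hx y hy => by
    constructor
    · intro hlt; exact ((h.2.2.1 x y).mp hlt).1
    · intro hlt; exact (h.2.2.1 x y).mpr ⟨hlt, hx, hy⟩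
  dc := fun x hx w hw => ⟨w, h.2.1 x hx w hw, rfl⟩
  lab := fun x hx => h.2.2.2.1 x hx
  form := fun x hx => by
    rw [Form.rename_id]
    exact (h.2.2.2.2.1 x hx).symm
  succs := fun x hx => by
    rw [Set.image_id, Set.image_id]
    exact h.2.2.2.2.2 x hx

end GoodEmb

end LPOF
lemma Form.sat_congr {v w : ℕ → Bool} :
    ∀ φ : Form, (∀ x ∈ φ.vars, v x = w x) → (φ.sat v ↔ φ.sat w)
  | .top, _ => Iff.rfl
  | .bot, _ => Iff.rfl
  | .conj a b, h => by
      simp only [Form.sat]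
      rw [Form.sat_congr a fun x hx => h x (Set.mem_union_left _ hx),
        Form.sat_congr b fun x hx => h x (Set.mem_union_right _ hx)]
  | .disj a b, h => by
      simp only [Form.sat]
      rw [Form.sat_congr a fun x hx => h x (Set.mem_union_left _ hx),
        Form.sat_congr b fun x hx => h x (Set.mem_union_right _ hx)]
  | .neg a, h => by
      simp only [Form.sat]
      rw [Form.sat_congr a h]
  | .var x, h => by
      simp only [Form.sat, h x rfl]

namespace LPOF

variable {L : Type} [LabelDCPO L]

/-! ### iso basics -/

lemma vars_subset_N (α : LPOF L) {x : ℕ} (hx : x ∈ α.N) :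
    (α.form x).vars ⊆ α.N :=
  fun y hy => (α.lt_mem (α.form_free x hx y hy)).1

lemma iso_refl (α : LPOF L) : α.iso α :=
  ⟨id, Set.bijOn_id _, fun _ _ _ _ => Iff.rfl, fun _ _ => rfl,
    fun x _ => (Form.rename_id _).symm⟩

lemma iso_goodEmb {α β : LPOF L} (h : α.iso β) :
    ∃ f, GoodEmb α β f ∧ Set.SurjOn f α.N β.N := by
  obtain ⟨f, hbij, hlt, hlab, hform⟩ := h
  refine ⟨f, ⟨hbij.injOn, hbij.mapsTo, hlt, ?_, fun x hx => le_of_eq (hlab x hx).symm,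
    hform, ?_⟩, hbij.surjOn⟩
  · intro x hx w hw
    have hwN : w ∈ β.N := (β.lt_mem hw).1
    obtain ⟨u, hu, rfl⟩ := hbij.surjOn hwN
    exact ⟨u, hu, rfl⟩
  · intro x hx
    ext w
    constructor
    · rintro ⟨y, hy, rfl⟩
      have hyN := succs_subset_N hy
      refine ⟨⟨(hlt x hx y hyN).mp hy.1, ?_⟩, ?_⟩
      · rintro ⟨z', hz1, hz2⟩
        have hz'N : z' ∈ β.N := (β.lt_mem hz1).2
        obtain ⟨z, hz, rfl⟩ := hbij.surjOn hz'N
        exact hy.2 ⟨z, (hlt x hx z hz).mpr hz1, (hlt z hz y hyN).mpr hz2⟩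
      · rintro ⟨z', ⟨z, hz, rfl⟩, hzlt⟩
        exact Bot_maximal hz y ((hlt z (Bot_subset_N hz) y hyN).mpr hzlt)
    · rintro ⟨hw1, hw2⟩
      have hwN : w ∈ β.N := succs_subset_N hw1
      obtain ⟨y, hy, rfl⟩ := hbij.surjOn hwN
      refine ⟨y, ⟨(hlt x hx y hy).mpr hw1.1, ?_⟩, rfl⟩
      rintro ⟨z, hz1, hz2⟩
      have hzN := (α.lt_mem hz1).2
      exact hw1.2 ⟨f z, (hlt x hx z hzN).mp hz1, (hlt z hzN y hy).mp hz2⟩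

lemma iso_symm {α β : LPOF L} (h : α.iso β) : β.iso α := by
  classical
  obtain ⟨f, hbij, hlt, hlab, hform⟩ := h
  set g := Function.invFunOn f α.N with hgdef
  have hinv : Set.InvOn g f α.N β.N := hbij.invOn_invFunOn
  have hbij' : Set.BijOn g β.N α.N := hbij.symm hinv.symm
  have hgf : ∀ x ∈ α.N, g (f x) = x := fun x hx => hinv.1 hx
  have hfg : ∀ y ∈ β.N, f (g y) = y := fun y hy => hinv.2 hy
  refine ⟨g, hbij', ?_, ?_, ?_⟩
  · intro x hx y hy
    have := hlt (g x) (hbij'.mapsTo hx) (g y) (hbij'.mapsTo hy)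
    rw [hfg x hx, hfg y hy] at this
    exact this.symm
  · intro y hy
    have := hlab (g y) (hbij'.mapsTo hy)
    rw [hfg y hy] at this
    exact this.symm
  · intro y hy
    have hu : g y ∈ α.N := hbij'.mapsTo hy
    have h1 := hform (g y) hu
    rw [hfg y hy] at h1
    rw [h1, Form.rename_comp]
    symm
    apply Form.rename_eq_id
    intro v hv
    exact hgf v (α.vars_subset_N hu hv)

lemma iso_trans {α β γ : LPOF L} (h1 : α.iso β) (h2 : β.iso γ) : α.iso γ := by
  obtain ⟨f, hbf, hltf, hlabf, hformf⟩ := h1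
  obtain ⟨g, hbg, hltg, hlabg, hformg⟩ := h2
  refine ⟨g ∘ f, hbg.comp hbf, ?_, ?_, ?_⟩
  · intro x hx y hy
    exact (hltf x hx y hy).trans (hltg _ (hbf.mapsTo hx) _ (hbf.mapsTo hy))
  · intro x hx
    show γ.lab (g (f x)) = _
    rw [hlabg _ (hbf.mapsTo hx), hlabf _ hx]
  · intro x hx
    show γ.form (g (f x)) = _
    rw [hformg _ (hbf.mapsTo hx), hformf _ hx, Form.rename_comp]

lemma mem_isoClass_self (α : LPOF L) : α ∈ isoClass α := iso_refl α

lemma isoClass_eq_of_mem {α β : LPOF L} (h : β ∈ isoClass α) :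
    isoClass β = isoClass α := by
  have hab : α.iso β := h
  ext γ
  exact ⟨fun hg => iso_trans hab hg, fun hg => iso_trans (iso_symm hab) hg⟩

end LPOF

/-! ### Pom helpers -/

def mkPom {L : Type} [LabelDCPO L] (α : LPOF L) : Pom L := ⟨isoClass α, α, rfl⟩

namespace LPOF

variable {L : Type} [LabelDCPO L]

lemma mem_mkPom (α : LPOF L) : α ∈ (mkPom α).1 := mem_isoClass_self α

lemma pom_eq_mkPom (A : Pom L) {α : LPOF L} (h : α ∈ A.1) : A = mkPom α := by
  obtain ⟨β, hβ⟩ := A.2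
  apply Subtype.ext
  show A.1 = isoClass α
  rw [hβ]
  rw [hβ] at h
  exact (isoClass_eq_of_mem h).symm

lemma exists_pom_rep (A : Pom L) : ∃ α, α ∈ A.1 := by
  obtain ⟨β, hβ⟩ := A.2
  exact ⟨β, by rw [hβ]; exact mem_isoClass_self β⟩

lemma iso_of_mem_same {A : Pom L} {α β : LPOF L} (hα : α ∈ A.1) (hβ : β ∈ A.1) :
    α.iso β := by
  obtain ⟨δ, hδ⟩ := A.2
  rw [hδ] at hα hβ
  exact iso_trans (iso_symm hα) hβ

/-! ### renaming an LPOF along an injection -/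

open Classical in
noncomputable def rlab (α : LPOF L) (q : ℕ → ℕ) (x : ℕ) : L :=
  if x ∈ q '' α.N then α.lab (Function.invFunOn q α.N x) else ⊥

open Classical in
noncomputable def rform (α : LPOF L) (q : ℕ → ℕ) (x : ℕ) : Form :=
  if x ∈ q '' α.N then (α.form (Function.invFunOn q α.N x)).rename q else Form.top

lemma rlab_mem (α : LPOF L) {q : ℕ → ℕ} (hq : Set.InjOn q α.N) {a : ℕ} (ha : a ∈ α.N) :
    rlab α q (q a) = α.lab a := by
  unfold rlab
  rw [if_pos ⟨a, ha, rfl⟩, hq.leftInvOn_invFunOn ha]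

lemma rlab_junk (α : LPOF L) (q : ℕ → ℕ) {x : ℕ} (hx : x ∉ q '' α.N) :
    rlab α q x = ⊥ := by
  unfold rlab; rw [if_neg hx]

lemma rform_mem (α : LPOF L) {q : ℕ → ℕ} (hq : Set.InjOn q α.N) {a : ℕ} (ha : a ∈ α.N) :
    rform α q (q a) = (α.form a).rename q := by
  unfold rform
  rw [if_pos ⟨a, ha, rfl⟩, hq.leftInvOn_invFunOn ha]

lemma rform_junk (α : LPOF L) (q : ℕ → ℕ) {x : ℕ} (hx : x ∉ q '' α.N) :
    rform α q x = Form.top := by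
  unfold rform; rw [if_neg hx]

noncomputable def renamed (α : LPOF L) (q : ℕ → ℕ) (hq : Set.InjOn q α.N) : LPOF L where
  N := q '' α.N
  lt x y := ∃ a b, α.lt a b ∧ q a = x ∧ q b = y
  lab := rlab α q
  form := rform α q
  lt_mem := by
    rintro x y ⟨a, b, hab, rfl, rfl⟩
    exact ⟨⟨a, (α.lt_mem hab).1, rfl⟩, ⟨b, (α.lt_mem hab).2, rfl⟩⟩
  lt_trans := by
    rintro x y z ⟨a, b, hab, rfl, rfl⟩ ⟨a', b', hab', ha', rfl⟩
    have : a' = b := hq ((α.lt_mem hab').1) ((α.lt_mem hab).2) ha'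
    subst this
    exact ⟨a, b', α.lt_trans hab hab', rfl, rfl⟩
  lt_irrefl := by
    rintro x ⟨a, b, hab, rfl, hb⟩
    have : b = a := hq ((α.lt_mem hab).2) ((α.lt_mem hab).1) hb
    subst this
    exact α.lt_irrefl _ hab
  finPred := by
    intro x
    by_cases hx : ∃ a ∈ α.N, q a = x
    · obtain ⟨a, ha, rfl⟩ := hx
      apply Set.Finite.subset ((α.finPred a).image q)
      rintro y ⟨c, d, hcd, rfl, hd⟩
      have : d = a := hq ((α.lt_mem hcd).2) ha hd
      subst this
      exact ⟨c, hcd, rfl⟩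
    · push_neg at hx
      apply Set.Finite.subset Set.finite_empty
      rintro y ⟨c, d, hcd, rfl, hd⟩
      exact absurd hd (hx d ((α.lt_mem hcd).2))
  finLevel := by
    intro n
    have hlev : ∀ a ∈ α.N,
        levOf (fun x y => ∃ a b, α.lt a b ∧ q a = x ∧ q b = y) (q a) = levOf α.lt a := by
      intro a ha
      have hset : levSet (fun x y => ∃ a b, α.lt a b ∧ q a = x ∧ q b = y) (q a)
          = levSet α.lt a := by
        ext n'
        constructor
        · rintro ⟨c', hcn, hc⟩
          classical
          set u : ℕ → ℕ := fun i => if i = n' then a else Function.invFunOn q α.N (c' i)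
            with hu
          have hqu : ∀ i ≤ n', u i ∈ α.N ∧ q (u i) = c' i := by
            intro i hin
            rcases Nat.lt_or_ge i n' with h' | h'
            · have hex : ∃ w ∈ α.N, q w = c' i := by
                obtain ⟨cc, dd, hcd, hc1, _⟩ := hc i h'
                exact ⟨cc, (α.lt_mem hcd).1, hc1⟩
              have hne : i ≠ n' := Nat.ne_of_lt h'
              simp only [hu, if_neg hne]
              exact ⟨Function.invFunOn_mem hex, Function.invFunOn_eq hex⟩
            · have : i = n' := le_antisymm hin h'
              subst this
              simp only [hu, if_pos rfl]
              exact ⟨ha, hcn.symm⟩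
          refine ⟨u, by simp [hu], ?_⟩
          intro i hi
          obtain ⟨cc, dd, hcd, hc1, hc2⟩ := hc i hi
          have e1 : cc = u i := by
            apply hq ((α.lt_mem hcd).1) (hqu i (le_of_lt hi)).1
            rw [hc1, (hqu i (le_of_lt hi)).2]
          have e2 : dd = u (i+1) := by
            apply hq ((α.lt_mem hcd).2) (hqu (i+1) (Nat.succ_le_of_lt hi)).1
            rw [hc2, (hqu (i+1) (Nat.succ_le_of_lt hi)).2]
          rw [← e1, ← e2]
          exact hcd
        · rintro ⟨c, hcn, hc⟩
          refine ⟨fun i => q (c i), by show q (c n') = q a; rw [hcn], ?_⟩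
          intro i hi
          exact ⟨c i, c (i+1), hc i hi, rfl, rfl⟩
      rw [levOf_eq_sSup, levOf_eq_sSup, hset]
    apply Set.Finite.subset ((α.finLevel n).image q)
    rintro x ⟨⟨a, ha, rfl⟩, hlx⟩
    refine ⟨a, ⟨ha, ?_⟩, rfl⟩
    rw [← hlev a ha]
    exact hlx
  singleRoot := by
    refine ⟨q α.root, ⟨⟨α.root, α.root_mem, rfl⟩, ?_⟩, ?_⟩
    · rintro y ⟨a, b, hab, ha, hb⟩
      have : b = α.root := hq ((α.lt_mem hab).2) α.root_mem hb
      subst this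
      exact α.root_nopred a hab
    · rintro x ⟨⟨a, ha, rfl⟩, hnp⟩
      have : a = α.root := by
        apply α.root_unique ha
        intro y hy
        exact hnp (q y) ⟨y, a, hy, rfl, rfl⟩
      rw [this]
  bot_maximal := by
    rintro x ⟨a, ha, rfl⟩ hlab y ⟨c, d, hcd, hc, hd⟩
    rw [rlab_mem α hq ha] at hlab
    have : c = a := hq ((α.lt_mem hcd).1) ha hc
    subst this
    exact α.bot_maximal c ha hlab d hcd
  form_sat := by
    rintro x ⟨a, ha, rfl⟩
    rw [rform_mem α hq ha]
    obtain ⟨v, hv⟩ := α.form_sat a ha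
    classical
    refine ⟨fun m => v (Function.invFunOn q α.N m), ?_⟩
    rw [Form.sat_rename]
    rw [Form.sat_congr (α.form a) (w := v)]
    · exact hv
    · intro y hy
      show v (Function.invFunOn q α.N (q y)) = v y
      rw [hq.leftInvOn_invFunOn (α.vars_subset_N ha hy)]
  form_free := by
    rintro x ⟨a, ha, rfl⟩ y hy
    rw [rform_mem α hq ha, Form.vars_rename] at hy
    obtain ⟨z, hz, rfl⟩ := hy
    exact ⟨z, a, α.form_free a ha z hz, rfl, rfl⟩
  form_impl := by
    rintro x y ⟨a, b, hab, rfl, rfl⟩ v hv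
    rw [rform_mem α hq ((α.lt_mem hab).2), Form.sat_rename] at hv
    rw [rform_mem α hq ((α.lt_mem hab).1), Form.sat_rename]
    exact α.form_impl hab _ hv
  lab_junk := fun x hx => rlab_junk α q hx
  form_junk := fun x hx => rform_junk α q hx

lemma renamed_lab {α : LPOF L} {q : ℕ → ℕ} (hq : Set.InjOn q α.N) {a : ℕ}
    (ha : a ∈ α.N) : (α.renamed q hq).lab (q a) = α.lab a := rlab_mem α hq ha

lemma renamed_form {α : LPOF L} {q : ℕ → ℕ} (hq : Set.InjOn q α.N) {a : ℕ}
    (ha : a ∈ α.N) : (α.renamed q hq).form (q a) = (α.form a).rename q := rform_mem α hq ha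

lemma renamed_mem_isoClass (α : LPOF L) (q : ℕ → ℕ) (hq : Set.InjOn q α.N) :
    α.renamed q hq ∈ isoClass α := by
  refine ⟨q, hq.bijOn_image, ?_, ?_, ?_⟩
  · intro x hx y hy
    constructor
    · intro h; exact ⟨x, y, h, rfl, rfl⟩
    · rintro ⟨a, b, hab, ha, hb⟩
      have e1 : a = x := hq ((α.lt_mem hab).1) hx ha
      have e2 : b = y := hq ((α.lt_mem hab).2) hy hb
      rw [← e1, ← e2]; exact hab
  · intro x hx; exact renamed_lab hq hx
  · intro x hx; exact renamed_form hq hx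

lemma renamed_succs {α : LPOF L} {q : ℕ → ℕ} (hq : Set.InjOn q α.N) {a : ℕ}
    (ha : a ∈ α.N) : (α.renamed q hq).succs (q a) = q '' α.succs a := by
  ext y'
  constructor
  · rintro ⟨⟨c, d, hcd, hc, rfl⟩, himm⟩
    have : c = a := hq ((α.lt_mem hcd).1) ha hc
    subst this
    refine ⟨d, ⟨hcd, ?_⟩, rfl⟩
    rintro ⟨z, hz1, hz2⟩
    exact himm ⟨q z, ⟨c, z, hz1, rfl, rfl⟩, ⟨z, d, hz2, rfl, rfl⟩⟩
  · rintro ⟨d, hd, rfl⟩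
    refine ⟨⟨a, d, hd.1, rfl, rfl⟩, ?_⟩
    rintro ⟨z', ⟨c1, d1, h1, hc1, rfl⟩, ⟨c2, d2, h2, hc2, hd2⟩⟩
    have e1 : c1 = a := hq ((α.lt_mem h1).1) ha hc1
    have e2 : c2 = d1 := hq ((α.lt_mem h2).1) ((α.lt_mem h1).2) hc2
    have e3 : d2 = d := hq ((α.lt_mem h2).2) (succs_subset_N hd) hd2
    rw [e1] at h1
    rw [e2, e3] at h2
    exact hd.2 ⟨d1, h1, h2⟩

lemma renamed_Bot {α : LPOF L} {q : ℕ → ℕ} (hq : Set.InjOn q α.N) :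
    (α.renamed q hq).Bot = q '' α.Bot := by
  ext x
  constructor
  · rintro ⟨⟨a, ha, rfl⟩, hlab⟩
    rw [renamed_lab hq ha] at hlab
    exact ⟨a, ⟨ha, hlab⟩, rfl⟩
  · rintro ⟨a, ⟨ha, hlab⟩, rfl⟩
    exact ⟨⟨a, ha, rfl⟩, by rw [renamed_lab hq ha]; exact hlab⟩

end LPOF
namespace LPOF

variable {L : Type} [LabelDCPO L]

lemma le_refl' (α : LPOF L) : α.le α :=
  ⟨subset_rfl, fun _ _ y hy => (α.lt_mem hy).1,
    fun _ _ => ⟨fun h => ⟨h, (α.lt_mem h).1, (α.lt_mem h).2⟩, fun h => h.1⟩,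
    fun _ _ => le_rfl, fun _ _ => rfl,
    fun x _ => by rw [succPlus_Bot_self, Set.diff_empty]⟩

lemma pomLe_refl (A : Pom L) : pomLe A A := fun β hβ => ⟨β, hβ, le_refl' β⟩

lemma GoodEmb.renamed_le {α γ : LPOF L} {f : ℕ → ℕ} (hf : GoodEmb α γ f) :
    (α.renamed f hf.inj).le γ := by
  refine ⟨?_, ?_, ?_, ?_, ?_, ?_⟩
  · rintro x ⟨a, ha, rfl⟩; exact hf.maps ha
  · rintro x ⟨a, ha, rfl⟩ y hy
    obtain ⟨u, hu, rfl⟩ := hf.dc a ha y hy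
    exact ⟨u, hu, rfl⟩
  · intro x y
    constructor
    · rintro ⟨a, b, hab, rfl, rfl⟩
      exact ⟨(hf.ltIff a ((α.lt_mem hab).1) b ((α.lt_mem hab).2)).mp hab,
        ⟨a, (α.lt_mem hab).1, rfl⟩, ⟨b, (α.lt_mem hab).2, rfl⟩⟩
    · rintro ⟨hγ, ⟨a, ha, rfl⟩, ⟨b, hb, rfl⟩⟩
      exact ⟨a, b, (hf.ltIff a ha b hb).mpr hγ, rfl, rfl⟩
  · rintro x ⟨a, ha, rfl⟩
    rw [renamed_lab hf.inj ha]
    exact hf.lab a ha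
  · rintro x ⟨a, ha, rfl⟩
    rw [renamed_form hf.inj ha]
    exact (hf.form a ha).symm
  · rintro x ⟨a, ha, rfl⟩
    rw [renamed_succs hf.inj ha, renamed_Bot hf.inj]
    exact hf.succs a ha

lemma le_renamed {α γ : LPOF L} {f q : ℕ → ℕ} (hf : GoodEmb α γ f)
    (hq : Set.InjOn q γ.N) (hqf : ∀ x ∈ α.N, q (f x) = x) :
    α.le (γ.renamed q hq) := by
  refine ⟨?_, ?_, ?_, ?_, ?_, ?_⟩
  · intro x hx
    exact ⟨f x, hf.maps hx, hqf x hx⟩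
  · intro x hx w hw
    obtain ⟨a, b, hab, rfl, hb⟩ := hw
    have e : b = f x := hq ((γ.lt_mem hab).2) (hf.maps hx) (hb.trans (hqf x hx).symm)
    rw [e] at hab
    obtain ⟨u, hu, rfl⟩ := hf.dc x hx a hab
    rw [hqf u hu]
    exact hu
  · intro x y
    constructor
    · intro h
      have hx := (α.lt_mem h).1
      have hy := (α.lt_mem h).2
      exact ⟨⟨f x, f y, (hf.ltIff x hx y hy).mp h, hqf x hx, hqf y hy⟩, hx, hy⟩
    · rintro ⟨⟨a, b, hab, ha, hb⟩, hx, hy⟩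
      have e1 : a = f x := hq ((γ.lt_mem hab).1) (hf.maps hx) (ha.trans (hqf x hx).symm)
      have e2 : b = f y := hq ((γ.lt_mem hab).2) (hf.maps hy) (hb.trans (hqf y hy).symm)
      rw [e1, e2] at hab
      exact (hf.ltIff x hx y hy).mpr hab
  · intro x hx
    calc α.lab x ≤ γ.lab (f x) := hf.lab x hx
      _ = (γ.renamed q hq).lab x := by
          rw [← renamed_lab hq (hf.maps hx), hqf x hx]
  · intro x hx
    have h1 : (γ.renamed q hq).form x = (γ.form (f x)).rename q := by
      conv_lhs => rw [← hqf x hx]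
      exact renamed_form hq (hf.maps hx)
    rw [h1, hf.form x hx, Form.rename_comp]
    exact (Form.rename_eq_id _ (fun v hv => hqf v (α.vars_subset_N hx hv))).symm
  · intro x hx
    have hsucc : (γ.renamed q hq).succs x = q '' (γ.succs (f x)) := by
      conv_lhs => rw [← hqf x hx]
      exact renamed_succs hq (hf.maps hx)
    have hA := hf.succs x hx
    ext y
    constructor
    · intro hy
      have hyN : y ∈ α.N := succs_subset_N hy
      constructor
      · rw [hsucc]
        refine ⟨f y, ?_, hqf y hyN⟩
        have h2 : f y ∈ f '' α.succs x := ⟨y, hy, rfl⟩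
        rw [hA] at h2
        exact h2.1
      · rintro ⟨z, hz, hlt⟩
        obtain ⟨c, d, hcd, hc, hd⟩ := hlt
        have hzN : z ∈ α.N := Bot_subset_N hz
        have e1 : c = f z := hq ((γ.lt_mem hcd).1) (hf.maps hzN) (hc.trans (hqf z hzN).symm)
        have e2 : d = f y := hq ((γ.lt_mem hcd).2) (hf.maps hyN) (hd.trans (hqf y hyN).symm)
        rw [e1, e2] at hcd
        exact Bot_maximal hz y ((hf.ltIff z hzN y hyN).mpr hcd)
    · rintro ⟨hy1, hy2⟩
      rw [hsucc] at hy1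
      obtain ⟨w, hw, rfl⟩ := hy1
      by_cases hsp : w ∈ γ.succPlus (f '' α.Bot)
      · exfalso
        obtain ⟨z', ⟨b, hb, rfl⟩, hblt⟩ := hsp
        apply hy2
        refine ⟨b, hb, ?_⟩
        have : (γ.renamed q hq).lt (q (f b)) (q w) := ⟨f b, w, hblt, rfl, rfl⟩
        rwa [hqf b (Bot_subset_N hb)] at this
      · have : w ∈ f '' α.succs x := by rw [hA]; exact ⟨hw, hsp⟩
        obtain ⟨u, hu, rfl⟩ := this
        rw [hqf u (succs_subset_N hu)]
        exact hu

lemma pomLe_of_goodEmb_aux {α γ : LPOF L} {φ : ℕ → ℕ} (hg : GoodEmb α γ φ)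
    (pad : ℕ → ℕ) (hpadinj : Set.InjOn pad (γ.N \ φ '' α.N))
    (hpadout : ∀ w ∈ γ.N, w ∉ φ '' α.N → pad w ∉ α.N) :
    ∃ β ∈ isoClass γ, α.le β := by
  classical
  set q : ℕ → ℕ := fun w => if h : ∃ u ∈ α.N, φ u = w then h.choose else pad w with hqdef
  have hqφ : ∀ u ∈ α.N, q (φ u) = u := by
    intro u hu
    have hex : ∃ u' ∈ α.N, φ u' = φ u := ⟨u, hu, rfl⟩
    simp only [hqdef, dif_pos hex]
    exact hg.inj hex.choose_spec.1 hu hex.choose_spec.2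
  have hqin : ∀ w, (h : ∃ u ∈ α.N, φ u = w) → q w ∈ α.N ∧ φ (q w) = w := by
    intro w hw
    simp only [hqdef, dif_pos hw]
    exact ⟨hw.choose_spec.1, hw.choose_spec.2⟩
  have hqout : ∀ w, ¬(∃ u ∈ α.N, φ u = w) → q w = pad w := by
    intro w hw
    simp only [hqdef, dif_neg hw]
  have himiff : ∀ w, (∃ u ∈ α.N, φ u = w) ↔ w ∈ φ '' α.N := fun w => Iff.rfl
  have hq : Set.InjOn q γ.N := by
    intro w1 h1 w2 h2 heq
    by_cases c1 : ∃ u ∈ α.N, φ u = w1 <;> by_cases c2 : ∃ u ∈ α.N, φ u = w2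
    · have e1 := (hqin w1 c1).2
      have e2 := (hqin w2 c2).2
      rw [← e1, ← e2, heq]
    · exfalso
      rw [hqout w2 c2] at heq
      exact hpadout w2 h2 (fun hc => c2 ((himiff w2).mpr hc)) (heq ▸ (hqin w1 c1).1)
    · exfalso
      rw [hqout w1 c1] at heq
      exact hpadout w1 h1 (fun hc => c1 ((himiff w1).mpr hc)) (heq ▸ (hqin w2 c2).1)
    · rw [hqout w1 c1, hqout w2 c2] at heq
      exact hpadinj ⟨h1, fun hc => c1 ((himiff w1).mpr hc)⟩
        ⟨h2, fun hc => c2 ((himiff w2).mpr hc)⟩ heq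
  exact ⟨γ.renamed q hq, renamed_mem_isoClass γ q hq, le_renamed hg hq hqφ⟩

lemma pomLe_of_goodEmb {α γ : LPOF L} {f : ℕ → ℕ} (hf : GoodEmb α γ f)
    (room : α.N.Finite ∨ Set.SurjOn f α.N γ.N) :
    pomLe (mkPom α) (mkPom γ) := by
  classical
  intro α' hα'
  have hiso : α.iso α' := hα'
  obtain ⟨e', hge', hsur'⟩ := iso_goodEmb (iso_symm hiso)
  have hg : GoodEmb α' γ (f ∘ e') := hge'.comp hf
  have room' : α'.N.Finite ∨ Set.SurjOn (f ∘ e') α'.N γ.N := by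
    rcases room with hfin | hsur
    · left
      obtain ⟨m, hbij, _, _, _⟩ := hiso
      rw [← hbij.image_eq]
      exact hfin.image m
    · right
      exact hsur.comp hsur'
  rcases room' with hfin | hsur
  · have hcompl : (α'.Nᶜ : Set ℕ).Infinite := hfin.infinite_compl
    set emb := Set.Infinite.natEmbedding _ hcompl with hemb
    refine pomLe_of_goodEmb_aux hg (fun w => (emb w).1)
      (fun w1 _ w2 _ heq => emb.injective (Subtype.ext heq))
      (fun w _ _ => (emb w).2)
  · refine pomLe_of_goodEmb_aux hg id ?_ ?_
    · intro w1 hw1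
      exact absurd (hsur hw1.1) hw1.2
    · intro w hw hw2
      exact absurd (hsur hw) hw2

lemma pomLe_of_goodEmb' {A B : Pom L} {α γ : LPOF L} {f : ℕ → ℕ}
    (hα : α ∈ A.1) (hγ : γ ∈ B.1) (hf : GoodEmb α γ f)
    (room : α.N.Finite ∨ Set.SurjOn f α.N γ.N) : pomLe A B := by
  rw [pom_eq_mkPom A hα, pom_eq_mkPom B hγ]
  exact pomLe_of_goodEmb hf room

lemma exists_rep_le {A S : Pom L} {σ : LPOF L} (hσ : σ ∈ S.1) (h : pomLe A S) :
    ∃ γ ∈ A.1, γ.le σ := by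
  obtain ⟨α₀, hα₀⟩ := exists_pom_rep A
  obtain ⟨β, hβ, hle⟩ := h α₀ hα₀
  have hbs : β.iso σ := iso_of_mem_same hβ hσ
  obtain ⟨g, hg, _⟩ := iso_goodEmb hbs
  have hcomp : GoodEmb α₀ σ (g ∘ id) := (GoodEmb.of_le hle).comp hg
  refine ⟨α₀.renamed (g ∘ id) hcomp.inj, ?_, hcomp.renamed_le⟩
  rw [pom_eq_mkPom A hα₀]
  exact renamed_mem_isoClass α₀ (g ∘ id) hcomp.inj

end LPOF
namespace LPOF

variable {L : Type} [LabelDCPO L]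

/-- hypotheses for forming a relabelled, down-closed sub-LPOF -/
def SubOK (σ : LPOF L) (P : Set ℕ) (l : ℕ → L) : Prop :=
  P ⊆ σ.N ∧ (∀ x ∈ P, ∀ y, σ.lt y x → y ∈ P) ∧ P.Nonempty ∧
  (∀ x ∈ P, l x = ⊥ → ∀ y ∈ P, ¬ σ.lt x y)

open Classical in
noncomputable def subLPOF (σ : LPOF L) (P : Set ℕ) (l : ℕ → L) (h : SubOK σ P l) :
    LPOF L where
  N := P
  lt x y := σ.lt x y ∧ x ∈ P ∧ y ∈ P
  lab x := if x ∈ P then l x else ⊥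
  form x := if x ∈ P then σ.form x else Form.top
  lt_mem := fun hl => ⟨hl.2.1, hl.2.2⟩
  lt_trans := fun h1 h2 => ⟨σ.lt_trans h1.1 h2.1, h1.2.1, h2.2.2⟩
  lt_irrefl := fun x hx => σ.lt_irrefl x hx.1
  finPred := fun x => (σ.finPred x).subset (fun y hy => hy.1)
  finLevel := by
    intro n
    apply Set.Finite.subset (σ.finLevel n)
    rintro x ⟨hx, hlev⟩
    refine ⟨h.1 hx, ?_⟩
    rw [← levOf_restrict σ h.2.1 (fun x y => Iff.rfl) x hx]
    exact hlev
  singleRoot := by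
    have hrootP : σ.root ∈ P := by
      obtain ⟨x, hx⟩ := h.2.2.1
      rcases σ.root_or_root_lt x (h.1 hx) with h' | h'
      · rwa [← h']
      · exact h.2.1 x hx σ.root h'
    refine ⟨σ.root, ⟨hrootP, fun y hy => σ.root_nopred y hy.1⟩, ?_⟩
    rintro x ⟨hxP, hnp⟩
    apply σ.root_unique (h.1 hxP)
    intro y hy
    exact hnp y ⟨hy, h.2.1 x hxP y hy, hxP⟩
  bot_maximal := by
    intro x hx hlab y hy
    have hlab' : (if x ∈ P then l x else ⊥) = ⊥ := hlab
    rw [if_pos hx] at hlab'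
    exact h.2.2.2 x hx hlab' y hy.2.2 hy.1
  form_sat := by
    intro x hx
    show ∃ v, Form.sat v (if x ∈ P then σ.form x else Form.top)
    rw [if_pos hx]
    exact σ.form_sat x (h.1 hx)
  form_free := by
    intro x hx y hy
    have hy' : y ∈ (if x ∈ P then σ.form x else Form.top).vars := hy
    rw [if_pos hx] at hy'
    have := σ.form_free x (h.1 hx) y hy'
    exact ⟨this, h.2.1 x hx y this, hx⟩
  form_impl := by
    rintro x y ⟨hxy, hx, hy⟩ v hv
    have hv' : Form.sat v (if y ∈ P then σ.form y else Form.top) := hv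
    rw [if_pos hy] at hv'
    show Form.sat v (if x ∈ P then σ.form x else Form.top)
    rw [if_pos hx]
    exact σ.form_impl hxy v hv'
  lab_junk := fun x hx => if_neg hx
  form_junk := fun x hx => if_neg hx

variable {σ : LPOF L} {P : Set ℕ} {l : ℕ → L}

lemma subLPOF_N (h : SubOK σ P l) : (subLPOF σ P l h).N = P := rfl

lemma subLPOF_lt (h : SubOK σ P l) (x y : ℕ) :
    (subLPOF σ P l h).lt x y ↔ (σ.lt x y ∧ x ∈ P ∧ y ∈ P) := Iff.rfl

lemma subLPOF_lab (h : SubOK σ P l) {x : ℕ} (hx : x ∈ P) :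
    (subLPOF σ P l h).lab x = l x := if_pos hx

lemma subLPOF_form (h : SubOK σ P l) {x : ℕ} (hx : x ∈ P) :
    (subLPOF σ P l h).form x = σ.form x := if_pos hx

lemma subLPOF_lev (h : SubOK σ P l) {x : ℕ} (hx : x ∈ P) :
    levOf (subLPOF σ P l h).lt x = levOf σ.lt x :=
  levOf_restrict σ h.2.1 (fun _ _ => Iff.rfl) x hx

lemma subLPOF_Bot (h : SubOK σ P l) :
    (subLPOF σ P l h).Bot = {x ∈ P | l x = ⊥} := by
  ext x
  constructor
  · rintro ⟨hx, hlab⟩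
    rw [subLPOF_lab h hx] at hlab
    exact ⟨hx, hlab⟩
  · rintro ⟨hx, hlab⟩
    exact ⟨hx, by rw [subLPOF_lab h hx]; exact hlab⟩

lemma subLPOF_succs (h : SubOK σ P l) {x : ℕ} (hx : x ∈ P) :
    (subLPOF σ P l h).succs x = σ.succs x ∩ P := by
  ext y
  constructor
  · rintro ⟨⟨hlt, _, hyP⟩, himm⟩
    refine ⟨⟨hlt, ?_⟩, hyP⟩
    rintro ⟨z, hz1, hz2⟩
    have hzP : z ∈ P := h.2.1 y hyP z hz2
    exact himm ⟨z, ⟨hz1, hx, hzP⟩, ⟨hz2, hzP, hyP⟩⟩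
  · rintro ⟨⟨hlt, himm⟩, hyP⟩
    refine ⟨⟨hlt, hx, hyP⟩, ?_⟩
    rintro ⟨z, hz1, hz2⟩
    exact himm ⟨z, hz1.1, hz2.1⟩

/-- a sub-LPOF is below the base, provided removed successors are covered by ⊥ nodes -/
lemma subLPOF_le_base (h : SubOK σ P l)
    (hl : ∀ x ∈ P, l x ≤ σ.lab x)
    (hcov : ∀ x ∈ P, ∀ y, σ.lt x y → y ∉ P → ∃ z ∈ P, l z = ⊥ ∧ σ.lt z y) :
    (subLPOF σ P l h).le σ := by
  refine ⟨h.1, fun x hx y hy => h.2.1 x hx y hy, fun _ _ => Iff.rfl, ?_, ?_, ?_⟩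
  · intro x hx
    rw [subLPOF_lab h hx]
    exact hl x hx
  · intro x hx
    exact subLPOF_form h hx
  · intro x hx
    rw [subLPOF_succs h hx]
    ext y
    constructor
    · rintro ⟨hy1, hy2⟩
      refine ⟨hy1, ?_⟩
      rintro ⟨z, hzB, hzlt⟩
      rw [subLPOF_Bot h] at hzB
      exact h.2.2.2 z hzB.1 hzB.2 y hy2 hzlt
    · rintro ⟨hy1, hy2⟩
      refine ⟨hy1, ?_⟩
      by_contra hyP
      obtain ⟨z, hzP, hzbot, hzlt⟩ := hcov x hx y hy1.1 hyP
      exact hy2 ⟨z, by rw [subLPOF_Bot h]; exact ⟨hzP, hzbot⟩, hzlt⟩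

/-- monotonicity between two sub-LPOFs of the same base -/
lemma subLPOF_le_subLPOF {P₁ P₂ : Set ℕ} {l₁ l₂ : ℕ → L}
    (h₁ : SubOK σ P₁ l₁) (h₂ : SubOK σ P₂ l₂)
    (hPP : P₁ ⊆ P₂) (hll : ∀ x ∈ P₁, l₁ x ≤ l₂ x)
    (hcov : ∀ x ∈ P₁, ∀ y ∈ P₂, σ.lt x y → y ∉ P₁ → ∃ z ∈ P₁, l₁ z = ⊥ ∧ σ.lt z y) :
    (subLPOF σ P₁ l₁ h₁).le (subLPOF σ P₂ l₂ h₂) := by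
  refine ⟨hPP, ?_, ?_, ?_, ?_, ?_⟩
  · rintro x hx y ⟨hy, _, _⟩
    exact h₁.2.1 x hx y hy
  · intro x y
    constructor
    · rintro ⟨hlt, hx, hy⟩
      exact ⟨⟨hlt, hPP hx, hPP hy⟩, hx, hy⟩
    · rintro ⟨⟨hlt, _, _⟩, hx, hy⟩
      exact ⟨hlt, hx, hy⟩
  · intro x hx
    rw [subLPOF_lab h₁ hx, subLPOF_lab h₂ (hPP hx)]
    exact hll x hx
  · intro x hx
    rw [subLPOF_form h₁ hx, subLPOF_form h₂ (hPP hx)]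
  · intro x hx
    rw [subLPOF_succs h₁ hx, subLPOF_succs h₂ (hPP hx)]
    ext y
    constructor
    · rintro ⟨hy1, hy2⟩
      refine ⟨⟨hy1, hPP hy2⟩, ?_⟩
      rintro ⟨z, hzB, hzlt⟩
      rw [subLPOF_Bot h₁] at hzB
      exact h₁.2.2.2 z hzB.1 hzB.2 y hy2 hzlt.1
    · rintro ⟨⟨hy1, hy2⟩, hy3⟩
      refine ⟨hy1, ?_⟩
      by_contra hyP
      obtain ⟨z, hzP, hzbot, hzlt⟩ := hcov x hx y hy2 hy1.1 hyP
      exact hy3 ⟨z, by rw [subLPOF_Bot h₁]; exact ⟨hzP, hzbot⟩, hzlt, hPP hzP, hy2⟩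

/-- the base is below a full relabelling with larger labels -/
lemma base_le_subLPOF {l : ℕ → L} (h : SubOK σ σ.N l)
    (hl : ∀ x ∈ σ.N, σ.lab x ≤ l x) :
    σ.le (subLPOF σ σ.N l h) := by
  refine ⟨subset_rfl, fun x hx y hy => hy.2.1, ?_, ?_, ?_, ?_⟩
  · intro x y
    constructor
    · intro hlt
      exact ⟨⟨hlt, (σ.lt_mem hlt).1, (σ.lt_mem hlt).2⟩, (σ.lt_mem hlt).1, (σ.lt_mem hlt).2⟩
    · rintro ⟨⟨hlt, _, _⟩, _, _⟩
      exact hlt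
  · intro x hx
    rw [subLPOF_lab h hx]
    exact hl x hx
  · intro x hx
    rw [subLPOF_form h hx]
  · intro x hx
    rw [subLPOF_succs h hx]
    ext y
    constructor
    · intro hy
      refine ⟨⟨hy, succs_subset_N hy⟩, ?_⟩
      rintro ⟨z, hzB, hzlt⟩
      exact Bot_maximal hzB y hzlt.1
    · rintro ⟨⟨hy1, _⟩, _⟩
      exact hy1

end LPOF
/-! ### Ultrafilter limit helpers -/

section Ultra

variable {ι : Type} {β : Type} (U : Ultrafilter ι)

lemma ultra_finite_val (f : ι → β) (S : Set β) (hS : S.Finite)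
    (h : {i | f i ∈ S} ∈ U) : ∃ v ∈ S, {i | f i = v} ∈ U := by
  classical
  by_contra hcon
  push_neg at hcon
  have hc : ∀ v ∈ S, {i | f i = v}ᶜ ∈ U := fun v hv =>
    Ultrafilter.compl_mem_iff_notMem.mpr (hcon v hv)
  have h2 : (⋂ v ∈ S, {i | f i = v}ᶜ) ∈ U := (Filter.biInter_mem hS).mpr hc
  have h3 := Filter.inter_mem h h2
  obtain ⟨i, hi1, hi2⟩ := Ultrafilter.nonempty_of_mem h3
  simp only [Set.mem_iInter, Set.mem_compl_iff, Set.mem_setOf_eq] at hi2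
  exact hi2 (f i) hi1 rfl

lemma ultra_unique {f : ι → β} {v w : β}
    (hv : {i | f i = v} ∈ U) (hw : {i | f i = w} ∈ U) : v = w := by
  obtain ⟨i, hi1, hi2⟩ := Ultrafilter.nonempty_of_mem (Filter.inter_mem hv hw)
  exact hi1.symm.trans hi2

open Classical in
noncomputable def ULim (f : ι → β) (d : β) : β :=
  if h : ∃ v, {i | f i = v} ∈ U then h.choose else d

lemma ULim_spec {f : ι → β} (d : β) (h : ∃ v, {i | f i = v} ∈ U) :
    {i | f i = ULim U f d} ∈ U := by
  unfold ULim
  rw [dif_pos h]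
  exact h.choose_spec

lemma ULim_eq {f : ι → β} (d : β) {v : β} (hv : {i | f i = v} ∈ U) :
    ULim U f d = v := by
  have h : ∃ v, {i | f i = v} ∈ U := ⟨v, hv⟩
  exact ultra_unique U (ULim_spec U d h) hv

lemma ULim_exists_of_finite {f : ι → β} {S : Set β} (hS : S.Finite)
    (h : {i | f i ∈ S} ∈ U) : ∃ v, {i | f i = v} ∈ U := by
  obtain ⟨v, _, hv⟩ := ultra_finite_val U f S hS h
  exact ⟨v, hv⟩

lemma ULim_mem {f : ι → β} {S : Set β} (hS : S.Finite) (d : β)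
    (h : {i | f i ∈ S} ∈ U) : ULim U f d ∈ S := by
  obtain ⟨v, hvS, hv⟩ := ultra_finite_val U f S hS h
  rw [ULim_eq U d hv]
  exact hvS

end Ultra

/-! ### Truncation -/

namespace LPOF

variable {L : Type} [LabelDCPO L]

lemma levOf_root (σ : LPOF L) : levOf σ.lt σ.root = 0 := by
  by_contra h
  have h' : 0 < levOf σ.lt σ.root := Nat.pos_of_ne_zero h
  obtain ⟨c, hcn, hc⟩ := σ.levOf_mem_levSet σ.root
  have := chain_lt_of_lt σ.lt (fun _ _ _ h1 h2 => σ.lt_trans h1 h2) c _ hc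
    (levOf σ.lt σ.root - 1) (levOf σ.lt σ.root) (by omega) le_rfl
  rw [hcn] at this
  exact σ.root_nopred _ this

def truncP (σ : LPOF L) (n : ℕ) : Set ℕ := {x ∈ σ.N | levOf σ.lt x ≤ n}

noncomputable def truncL (σ : LPOF L) (n : ℕ) : ℕ → L :=
  fun x => if levOf σ.lt x < n then σ.lab x else ⊥

lemma truncOK (σ : LPOF L) (n : ℕ) : SubOK σ (truncP σ n) (truncL σ n) := by
  refine ⟨fun x hx => hx.1, ?_, ?_, ?_⟩
  · rintro x ⟨hxN, hxl⟩ y hy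
    exact ⟨(σ.lt_mem hy).1, le_of_lt (lt_of_lt_of_le (σ.levOf_lt_levOf hy) hxl)⟩
  · exact ⟨σ.root, σ.root_mem, by rw [σ.levOf_root]; exact Nat.zero_le n⟩
  · rintro x ⟨hxN, hxl⟩ hbot y ⟨hyN, hyl⟩ hlt
    unfold truncL at hbot
    by_cases hc : levOf σ.lt x < n
    · rw [if_pos hc] at hbot
      exact σ.bot_maximal x hxN hbot y hlt
    · have : levOf σ.lt x = n := le_antisymm hxl (Nat.le_of_not_lt hc)
      have := σ.levOf_lt_levOf hlt
      omega

noncomputable def trunc (σ : LPOF L) (n : ℕ) : LPOF L :=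
  subLPOF σ (truncP σ n) (truncL σ n) (truncOK σ n)

lemma trunc_N_finite (σ : LPOF L) (n : ℕ) : (σ.trunc n).N.Finite := by
  show (truncP σ n).Finite
  apply Set.Finite.subset (Set.Finite.biUnion (Set.finite_Iic n)
    (fun k _ => σ.finLevel k))
  rintro x ⟨hx, hlev⟩
  exact Set.mem_biUnion (Set.mem_Iic.mpr hlev) ⟨hx, rfl⟩

lemma trunc_le_base (σ : LPOF L) (n : ℕ) : (σ.trunc n).le σ := by
  apply subLPOF_le_base
  · rintro x ⟨hxN, hxl⟩
    unfold truncL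
    by_cases hc : levOf σ.lt x < n
    · rw [if_pos hc]
    · rw [if_neg hc]; exact bot_le
  · rintro x ⟨hxN, hxl⟩ y hlt hyP
    have hyN := (σ.lt_mem hlt).2
    have hylev : n < levOf σ.lt y := by
      by_contra hcon
      exact hyP ⟨hyN, Nat.le_of_not_lt hcon⟩
    obtain ⟨z, hz, hzlev⟩ := σ.exists_pred_of_lt_levOf hylev
    refine ⟨z, ⟨(σ.lt_mem hz).1, le_of_eq hzlev⟩, ?_, hz⟩
    unfold truncL
    rw [hzlev, if_neg (Nat.lt_irrefl n)]

lemma trunc_le_trunc (σ : LPOF L) {n m : ℕ} (hnm : n ≤ m) :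
    (σ.trunc n).le (σ.trunc m) := by
  apply subLPOF_le_subLPOF
  · rintro x ⟨hxN, hxl⟩
    exact ⟨hxN, le_trans hxl hnm⟩
  · rintro x ⟨hxN, hxl⟩
    unfold truncL
    by_cases hc : levOf σ.lt x < n
    · rw [if_pos hc, if_pos (lt_of_lt_of_le hc hnm)]
    · rw [if_neg hc]; exact bot_le
  · rintro x ⟨hxN, hxl⟩ y ⟨hyN, hyl⟩ hlt hyP
    have hylev : n < levOf σ.lt y := by
      by_contra hcon
      exact hyP ⟨hyN, Nat.le_of_not_lt hcon⟩
    obtain ⟨z, hz, hzlev⟩ := σ.exists_pred_of_lt_levOf hylev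
    refine ⟨z, ⟨(σ.lt_mem hz).1, le_of_eq hzlev⟩, ?_, hz⟩
    unfold truncL
    rw [hzlev, if_neg (Nat.lt_irrefl n)]

end LPOF
lemma Form.vars_finite : ∀ φ : Form, φ.vars.Finite
  | .top => Set.finite_empty
  | .bot => Set.finite_empty
  | .conj a b => (Form.vars_finite a).union (Form.vars_finite b)
  | .disj a b => (Form.vars_finite a).union (Form.vars_finite b)
  | .neg a => Form.vars_finite a
  | .var _ => Set.finite_singleton _

namespace LPOF

variable {L : Type} [LabelDCPO L]

lemma succPlus_empty (γ : LPOF L) : γ.succPlus ∅ = ∅ := by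
  ext y
  simp [succPlus]

lemma trunc_mem_iff {S : LPOF L} {n x : ℕ} :
    x ∈ (S.trunc n).N ↔ x ∈ S.N ∧ levOf S.lt x ≤ n := Iff.rfl

lemma trunc_lab_eq {S : LPOF L} {n x : ℕ} (hx : x ∈ S.N) (hlev : levOf S.lt x < n) :
    (S.trunc n).lab x = S.lab x := by
  rw [show (S.trunc n).lab x = truncL S n x from
    subLPOF_lab (truncOK S n) ⟨hx, le_of_lt hlev⟩]
  unfold truncL
  rw [if_pos hlev]

lemma trunc_Bot_eq {S : LPOF L} (hnb : ∀ z ∈ S.N, S.lab z ≠ ⊥) (n : ℕ) :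
    (S.trunc n).Bot = {z ∈ S.N | levOf S.lt z = n} := by
  rw [show (S.trunc n).Bot = _ from subLPOF_Bot (truncOK S n)]
  ext z
  constructor
  · rintro ⟨⟨hzN, hzle⟩, hzl⟩
    unfold truncL at hzl
    refine ⟨hzN, ?_⟩
    by_cases hc : levOf S.lt z < n
    · rw [if_pos hc] at hzl
      exact absurd hzl (hnb z hzN)
    · omega
  · rintro ⟨hzN, hzlev⟩
    refine ⟨⟨hzN, le_of_eq hzlev⟩, ?_⟩
    unfold truncL
    rw [hzlev, if_neg (Nat.lt_irrefl n)]

lemma trunc_Bot_iff {S : LPOF L} (hnb : ∀ z ∈ S.N, S.lab z ≠ ⊥) (n z : ℕ) :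
    z ∈ (S.trunc n).Bot ↔ z ∈ S.N ∧ levOf S.lt z = n :=
  Set.ext_iff.mp (trunc_Bot_eq hnb n) z

lemma trunc_form_eq {S : LPOF L} {n x : ℕ} (hx : x ∈ (S.trunc n).N) :
    (S.trunc n).form x = S.form x := subLPOF_form (truncOK S n) hx

lemma trunc_succs_eq {S : LPOF L} {n x : ℕ} (hx : x ∈ (S.trunc n).N) :
    (S.trunc n).succs x = S.succs x ∩ (S.trunc n).N :=
  subLPOF_succs (truncOK S n) hx

/-- the central "least upper bound" lemma: if `c` is an upper bound of all
truncations of a ⊥-free `S`, then `S ⊑ c`. -/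
lemma trunc_sup_least {S : LPOF L} (hnb : ∀ z ∈ S.N, S.lab z ≠ ⊥)
    (c : Pom L) (hc : ∀ n : ℕ, pomLe (mkPom (S.trunc n)) c) :
    pomLe (mkPom S) c := by
  classical
  obtain ⟨γ₀, hγ₀⟩ := exists_pom_rep c
  have hSbot : S.Bot = ∅ := by
    ext z
    simp only [Bot, Set.mem_setOf_eq, Set.mem_empty_iff_false, iff_false, not_and]
    exact hnb z
  -- embeddings of each truncation into γ₀
  have hemb : ∀ n : ℕ, ∃ g, GoodEmb (S.trunc n) γ₀ g := by
    intro n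
    obtain ⟨δ, hδ, hle⟩ := exists_rep_le hγ₀ (hc n)
    have hiso : (S.trunc n).iso δ := hδ
    obtain ⟨e, he, _⟩ := iso_goodEmb hiso
    exact ⟨id ∘ e, he.comp (GoodEmb.of_le hle)⟩
  set g : ℕ → ℕ → ℕ := fun n => (hemb n).choose with hgdef
  have hg : ∀ n, GoodEmb (S.trunc n) γ₀ (g n) := fun n => (hemb n).choose_spec
  -- the ultrafilter
  set U : Ultrafilter ℕ := Ultrafilter.of Filter.atTop with hUdef
  have hUat : ∀ m : ℕ, {n | m ≤ n} ∈ U :=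
    fun m => Ultrafilter.of_le Filter.atTop (Filter.mem_atTop m)
  have hUfin : ∀ s : Set ℕ, s.Finite → s ∉ U := by
    intro s hs hmem
    obtain ⟨K, hK⟩ := hs.bddAbove
    have hsc : sᶜ ∈ U := by
      apply Ultrafilter.of_le Filter.atTop
      apply Filter.mem_of_superset (Filter.mem_atTop (K + 1))
      intro n hn hns
      have := hK hns
      simp only [Set.mem_setOf_eq] at hn
      omega
    exact (Ultrafilter.compl_mem_iff_notMem.mp hsc) hmem
  -- basic membership sets
  have hMx : ∀ x ∈ S.N, {n | x ∈ (S.trunc n).N} ∈ U := by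
    intro x hx
    apply Filter.mem_of_superset (hUat (levOf S.lt x))
    intro n hn
    exact ⟨hx, hn⟩
  -- the limit embedding
  set G : ℕ → ℕ := fun x => ULim U (fun n => g n x) 0 with hGdef
  -- level sets of γ₀
  have hlevg : ∀ x, ∀ n, x ∈ (S.trunc n).N →
      g n x ∈ γ₀.N ∧ levOf γ₀.lt (g n x) = levOf S.lt x := by
    intro x n hxn
    refine ⟨(hg n).maps hxn, ?_⟩
    rw [(hg n).lev_eq x hxn]
    exact subLPOF_lev (truncOK S n) hxn
  have hTmem : ∀ x ∈ S.N,
      {n | g n x ∈ {w ∈ γ₀.N | levOf γ₀.lt w = levOf S.lt x}} ∈ U := by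
    intro x hx
    apply Filter.mem_of_superset (hMx x hx)
    intro n hn
    exact (hlevg x n hn).2 ▸ ⟨(hlevg x n hn).1, rfl⟩
  have hGU : ∀ x ∈ S.N, {n | g n x = G x} ∈ U := by
    intro x hx
    exact ULim_spec U 0 (ULim_exists_of_finite U (γ₀.finLevel (levOf S.lt x)) (hTmem x hx))
  have hGmem : ∀ x ∈ S.N, G x ∈ γ₀.N ∧ levOf γ₀.lt (G x) = levOf S.lt x := by
    intro x hx
    have := ULim_mem U (γ₀.finLevel (levOf S.lt x)) 0 (hTmem x hx)
    exact ⟨this.1, this.2⟩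
  -- the extraction principle
  have extract : ∀ w ∈ γ₀.N, ∀ P : ℕ → Prop, ∀ A ∈ U,
      (∀ n ∈ A, ∃ u, P u ∧ u ∈ S.N ∧ levOf S.lt u = levOf γ₀.lt w ∧ g n u = w) →
      ∃ u, P u ∧ u ∈ S.N ∧ G u = w := by
    intro w hw P A hA hAn
    set uf : ℕ → ℕ := fun n =>
      if h : ∃ u, P u ∧ u ∈ S.N ∧ levOf S.lt u = levOf γ₀.lt w ∧ g n u = w
      then h.choose else 0 with hufdef
    have hufn : ∀ n ∈ A, P (uf n) ∧ uf n ∈ S.N ∧ levOf S.lt (uf n) = levOf γ₀.lt w ∧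
        g n (uf n) = w := by
      intro n hn
      have h := hAn n hn
      simp only [hufdef, dif_pos h]
      exact h.choose_spec
    have hufmem : {n | uf n ∈ {u ∈ S.N | levOf S.lt u = levOf γ₀.lt w}} ∈ U := by
      apply Filter.mem_of_superset hA
      intro n hn
      exact ⟨(hufn n hn).2.1, (hufn n hn).2.2.1⟩
    set u : ℕ := ULim U uf 0 with hudef
    have hueq : {n | uf n = u} ∈ U :=
      ULim_spec U 0 (ULim_exists_of_finite U (S.finLevel (levOf γ₀.lt w)) hufmem)
    obtain ⟨n₀, hn₀A, hn₀e⟩ := Ultrafilter.nonempty_of_mem (Filter.inter_mem hA hueq)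
    have hu := hufn n₀ hn₀A
    rw [hn₀e] at hu
    refine ⟨u, hu.1, hu.2.1, ?_⟩
    apply ULim_eq U 0
    apply Filter.mem_of_superset (Filter.inter_mem hA hueq)
    rintro n ⟨hnA, hne⟩
    have := (hufn n hnA).2.2.2
    rwa [hne] at this
  -- ruling out the "frontier" case for predecessors of a fixed node
  have nofrontier : ∀ w ∈ γ₀.N,
      ¬ ({n | ∃ z, z ∈ (S.trunc n).Bot ∧ γ₀.lt (g n z) w} ∈ U) := by
    intro w hw hB
    set B := {n | ∃ z, z ∈ (S.trunc n).Bot ∧ γ₀.lt (g n z) w} with hBdef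
    set p : ℕ → ℕ := fun n =>
      if h : ∃ z, z ∈ (S.trunc n).Bot ∧ γ₀.lt (g n z) w then g n h.choose else 0
      with hpdef
    have hpn : ∀ n ∈ B, γ₀.lt (p n) w ∧ levOf γ₀.lt (p n) = n := by
      intro n hn
      have h : ∃ z, z ∈ (S.trunc n).Bot ∧ γ₀.lt (g n z) w := hn
      have hpe : p n = g n h.choose := by
        simp only [hpdef]
        rw [dif_pos h]
      obtain ⟨hz, hlt⟩ := h.choose_spec
      have hz2 := (trunc_Bot_iff hnb n _).mp hz
      rw [hpe]
      refine ⟨hlt, ?_⟩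
      rw [(hlevg _ n ⟨hz2.1, le_of_eq hz2.2⟩).2]
      exact hz2.2
    have hpinj : Set.InjOn p B := by
      intro n hn m hm he
      rw [← (hpn n hn).2, ← (hpn m hm).2, he]
    have hBfin : B.Finite := by
      have himg : (p '' B).Finite := (γ₀.finPred w).subset (by
        rintro y ⟨n, hn, rfl⟩
        exact (hpn n hn).1)
      exact Set.Finite.of_finite_image himg hpinj
    exact hUfin B hBfin hB
  -- now the GoodEmb
  have hGood : GoodEmb S γ₀ G := by
    refine ⟨?_, ?_, ?_, ?_, ?_, ?_, ?_⟩
    · -- inj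
      intro x hx y hy he
      obtain ⟨n, hn⟩ := Ultrafilter.nonempty_of_mem
        (Filter.inter_mem (Filter.inter_mem (hGU x hx) (hGU y hy))
          (Filter.inter_mem (hMx x hx) (hMx y hy)))
      obtain ⟨⟨hgx, hgy⟩, hxn, hyn⟩ := hn
      apply (hg n).inj hxn hyn
      rw [hgx, hgy, he]
    · -- maps
      intro x hx
      exact (hGmem x hx).1
    · -- ltIff
      intro x hx y hy
      obtain ⟨n, hn⟩ := Ultrafilter.nonempty_of_mem
        (Filter.inter_mem (Filter.inter_mem (hGU x hx) (hGU y hy))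
          (Filter.inter_mem (hMx x hx) (hMx y hy)))
      obtain ⟨⟨hgx, hgy⟩, hxn, hyn⟩ := hn
      constructor
      · intro hlt
        have : (S.trunc n).lt x y := ⟨hlt, hxn, hyn⟩
        have := ((hg n).ltIff x hxn y hyn).mp this
        rwa [hgx, hgy] at this
      · intro hlt
        rw [← hgx, ← hgy] at hlt
        exact (((hg n).ltIff x hxn y hyn).mpr hlt).1
    · -- dc
      intro x hx w hw
      have hwN : w ∈ γ₀.N := (γ₀.lt_mem hw).1
      have hA : {n | g n x = G x} ∩ {n | x ∈ (S.trunc n).N} ∈ U :=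
        Filter.inter_mem (hGU x hx) (hMx x hx)
      obtain ⟨u, _, huN, hueq⟩ := extract w hwN (fun _ => True) _ hA (by
        rintro n ⟨hgx, hxn⟩
        have hw' : γ₀.lt w (g n x) := by rw [hgx]; exact hw
        obtain ⟨u, hun, hue⟩ := (hg n).dc x hxn w hw'
        refine ⟨u, trivial, hun.1, ?_, hue⟩
        rw [← hue, (hlevg u n hun).2])
      exact ⟨u, huN, hueq⟩
    · -- lab
      intro x hx
      obtain ⟨n, hn⟩ := Ultrafilter.nonempty_of_mem
        (Filter.inter_mem (hGU x hx) (hUat (levOf S.lt x + 1)))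
      obtain ⟨hgx, hlev⟩ := hn
      simp only [Set.mem_setOf_eq] at hlev
      have hxn : x ∈ (S.trunc n).N := ⟨hx, by omega⟩
      have := (hg n).lab x hxn
      rw [trunc_lab_eq hx (by omega), hgx] at this
      exact this
    · -- form
      intro x hx
      have hvars : ∀ v ∈ (S.form x).vars, v ∈ S.N :=
        fun v hv => (S.lt_mem (S.form_free x hx v hv)).1
      have hbig : ({n | g n x = G x} ∩ {n | x ∈ (S.trunc n).N}) ∩
          (⋂ v ∈ (S.form x).vars, {n | g n v = G v}) ∈ U := by
        refine Filter.inter_mem (Filter.inter_mem (hGU x hx) (hMx x hx)) ?_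
        rw [Filter.biInter_mem (Form.vars_finite (S.form x))]
        intro v hv
        exact hGU v (hvars v hv)
      obtain ⟨n, hn⟩ := Ultrafilter.nonempty_of_mem hbig
      obtain ⟨⟨hgx, hxn⟩, hvs⟩ := hn
      simp only [Set.mem_iInter, Set.mem_setOf_eq] at hvs
      have h1 := (hg n).form x hxn
      rw [trunc_form_eq hxn] at h1
      rw [← hgx]
      rw [h1]
      apply Form.rename_congr
      intro v hv
      exact hvs v hv
    · -- succs
      intro x hx
      rw [hSbot, Set.image_empty, succPlus_empty, Set.diff_empty]
      ext w
      constructor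
      · rintro ⟨y, hy, rfl⟩
        have hyN : y ∈ S.N := succs_subset_N hy
        have hbig : ({n | g n x = G x} ∩ {n | g n y = G y}) ∩
            ({n | x ∈ (S.trunc n).N} ∩ {n | y ∈ (S.trunc n).N}) ∈ U :=
          Filter.inter_mem (Filter.inter_mem (hGU x hx) (hGU y hyN))
            (Filter.inter_mem (hMx x hx) (hMx y hyN))
        obtain ⟨n, hn⟩ := Ultrafilter.nonempty_of_mem hbig
        obtain ⟨⟨hgx, hgy⟩, hxn, hyn⟩ := hn
        have hys : y ∈ (S.trunc n).succs x := by
          rw [trunc_succs_eq hxn]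
          exact ⟨hy, hyn⟩
        have : g n y ∈ g n '' ((S.trunc n).succs x) := ⟨y, hys, rfl⟩
        rw [(hg n).succs x hxn] at this
        rw [← hgx, ← hgy]
        exact this.1
      · intro hw
        have hwN : w ∈ γ₀.N := succs_subset_N hw
        -- for U-many n, w ∈ γ₀.succs (g n x)
        have hbig : {n | g n x = G x} ∩ {n | x ∈ (S.trunc n).N} ∈ U :=
          Filter.inter_mem (hGU x hx) (hMx x hx)
        have hsplit : ({n | ∃ u, u ∈ (S.trunc n).succs x ∧ g n u = w} ∪
            {n | ∃ z, z ∈ (S.trunc n).Bot ∧ γ₀.lt (g n z) w}) ∈ U := by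
          apply Filter.mem_of_superset hbig
          rintro n ⟨hgx, hxn⟩
          have hw' : w ∈ γ₀.succs (g n x) := by rw [hgx]; exact hw
          by_cases hcase : w ∈ γ₀.succPlus (g n '' (S.trunc n).Bot)
          · right
            obtain ⟨z', ⟨z, hz, rfl⟩, hzl⟩ := hcase
            exact ⟨z, hz, hzl⟩
          · left
            have : w ∈ g n '' ((S.trunc n).succs x) := by
              rw [(hg n).succs x hxn]
              exact ⟨hw', hcase⟩
            obtain ⟨u, hu, rfl⟩ := this
            exact ⟨u, hu, rfl⟩
        have hA : {n | ∃ u, u ∈ (S.trunc n).succs x ∧ g n u = w} ∈ U := by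
          rcases Ultrafilter.union_mem_iff.mp hsplit with h | h
          · exact h
          · exact absurd h (nofrontier w hwN)
        obtain ⟨u, hu, huN, hueq⟩ := extract w hwN (fun u => u ∈ S.succs x) _ hA (by
          rintro n ⟨u, hu, hue⟩
          have hun : u ∈ (S.trunc n).N := succs_subset_N hu
          have hxn : x ∈ (S.trunc n).N := by
            have h1 : (S.trunc n).lt x u := hu.1
            exact ((subLPOF_lt (truncOK S n) x u).mp h1).2.1
          have huS : u ∈ S.succs x := by
            have h2 := hu
            rw [trunc_succs_eq hxn] at h2
            exact h2.1
          refine ⟨u, huS, hun.1, ?_, hue⟩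
          rw [← hue, (hlevg u n hun).2])
        exact ⟨u, hu, hueq⟩
  -- surjectivity
  have hsurj : Set.SurjOn G S.N γ₀.N := by
    intro w hw
    have hsplit : ({n | ∃ u, u ∈ (S.trunc n).N ∧ g n u = w} ∪
        {n | ∃ z, z ∈ (S.trunc n).Bot ∧ γ₀.lt (g n z) w}) ∈ U := by
      apply Filter.mem_of_superset (hUat 0)
      intro n _
      by_cases hcase : ∃ u ∈ (S.trunc n).N, g n u = w
      · left
        obtain ⟨u, hu, hue⟩ := hcase
        exact ⟨u, hu, hue⟩
      · right
        push_neg at hcase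
        obtain ⟨z, hz, hzl⟩ := (hg n).growth w hw hcase
        exact ⟨z, hz, hzl⟩
    have hA : {n | ∃ u, u ∈ (S.trunc n).N ∧ g n u = w} ∈ U := by
      rcases Ultrafilter.union_mem_iff.mp hsplit with h | h
      · exact h
      · exact absurd h (nofrontier w hw)
    obtain ⟨u, _, huN, hueq⟩ := extract w hw (fun _ => True) _ hA (by
      rintro n ⟨u, hu, hue⟩
      refine ⟨u, trivial, hu.1, ?_, hue⟩
      rw [← hue, (hlevg u n hu).2])
    exact ⟨u, huN, hueq⟩
  exact pomLe_of_goodEmb' (mem_mkPom S) hγ₀ hGood (Or.inr hsurj)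

end LPOF
namespace LPOF

variable {L : Type} [LabelDCPO L]

/-- Direction 1: compact implies finite. -/
lemma pomCompact_finite {A : Pom L} (hA : pomCompact A) : PomFinite A := by
  classical
  intro α hα
  by_contra hfin
  have hinf : α.N.Infinite := hfin
  -- the root has a non-⊥ label
  have hroot_lab : α.lab α.root ≠ ⊥ := by
    obtain ⟨u, hu, v, hv, huv⟩ := hinf.nontrivial
    have hex : ∃ y ∈ α.N, y ≠ α.root := by
      by_cases hcu : u = α.root
      · exact ⟨v, hv, fun h => huv (hcu.trans h.symm)⟩
      · exact ⟨u, hu, hcu⟩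
    obtain ⟨y, hy, hyne⟩ := hex
    have hlt : α.lt α.root y := by
      rcases α.root_or_root_lt y hy with h | h
      · exact absurd h hyne
      · exact h
    intro hbot
    exact α.bot_maximal α.root α.root_mem hbot y hlt
  set lS : ℕ → L := fun x => if α.lab x = ⊥ then α.lab α.root else α.lab x with hlS
  have hlSne : ∀ x, lS x ≠ ⊥ := by
    intro x
    simp only [hlS]
    by_cases h : α.lab x = ⊥
    · rw [if_pos h]; exact hroot_lab
    · rw [if_neg h]; exact h
  have hSOK : SubOK α α.N lS :=
    ⟨subset_rfl, fun x _ y hy => (α.lt_mem hy).1, ⟨α.root, α.root_mem⟩,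
      fun x _ hb => absurd hb (hlSne x)⟩
  set S := subLPOF α α.N lS hSOK with hSdef
  have hnb : ∀ z ∈ S.N, S.lab z ≠ ⊥ := by
    intro z hz
    rw [hSdef, subLPOF_lab hSOK hz]
    exact hlSne z
  have hαS : α.le S := by
    apply base_le_subLPOF hSOK
    intro x hx
    simp only [hlS]
    by_cases h : α.lab x = ⊥
    · rw [if_pos h, h]; exact bot_le
    · rw [if_neg h]
  set D : Set (Pom L) := Set.range (fun n => mkPom (S.trunc n)) with hDdef
  have hDne : D.Nonempty := ⟨_, 0, rfl⟩
  have hDdir : DirectedOn pomLe D := by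
    rintro _ ⟨n, rfl⟩ _ ⟨m, rfl⟩
    refine ⟨mkPom (S.trunc (max n m)), ⟨max n m, rfl⟩, ?_, ?_⟩
    · exact pomLe_of_goodEmb (GoodEmb.of_le (S.trunc_le_trunc (le_max_left n m)))
        (Or.inl (S.trunc_N_finite n))
    · exact pomLe_of_goodEmb (GoodEmb.of_le (S.trunc_le_trunc (le_max_right n m)))
        (Or.inl (S.trunc_N_finite m))
  have hSup : isSup pomLe D (mkPom S) := by
    constructor
    · rintro _ ⟨n, rfl⟩
      exact pomLe_of_goodEmb (GoodEmb.of_le (S.trunc_le_base n))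
        (Or.inl (S.trunc_N_finite n))
    · intro c hcUB
      exact trunc_sup_least hnb c (fun n => hcUB _ ⟨n, rfl⟩)
  have hAS : pomLe A (mkPom S) :=
    pomLe_of_goodEmb' hα (mem_mkPom S) (GoodEmb.of_le hαS)
      (Or.inr (fun x hx => ⟨x, hx, rfl⟩))
  obtain ⟨C, hCD, hAC⟩ := hA D hDne hDdir (mkPom S) hSup hAS
  obtain ⟨n, rfl⟩ := hCD
  obtain ⟨β, hβ, hle⟩ := hAC α hα
  have hβfin : β.N.Finite := by
    have hiso : (S.trunc n).iso β := hβ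
    obtain ⟨m, hbij, _, _, _⟩ := hiso
    rw [← hbij.image_eq]
    exact (S.trunc_N_finite n).image m
  exact hinf (hβfin.subset hle.1)

end LPOF
namespace LPOF

variable {L : Type} [LabelDCPO L]

lemma GoodEmb.to_le {α δ : LPOF L} (h : GoodEmb α δ id) : α.le δ := by
  refine ⟨fun x hx => h.maps hx, ?_, ?_, h.lab, ?_, ?_⟩
  · intro x hx w hw
    obtain ⟨u, hu, rfl⟩ := h.dc x hx w hw
    exact hu
  · intro x y
    constructor
    · intro hlt
      exact ⟨(h.ltIff x (α.lt_mem hlt).1 y (α.lt_mem hlt).2).mp hlt,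
        (α.lt_mem hlt).1, (α.lt_mem hlt).2⟩
    · rintro ⟨hlt, hx, hy⟩
      exact (h.ltIff x hx y hy).mpr hlt
  · intro x hx
    rw [← Form.rename_id (α.form x)]
    exact (h.form x hx).symm
  · intro x hx
    have := h.succs x hx
    rwa [Set.image_id, Set.image_id] at this

lemma pomLe_trans {A B C : Pom L} (h1 : pomLe A B) (h2 : pomLe B C) : pomLe A C := by
  intro α hα
  obtain ⟨β, hβ, l1⟩ := h1 α hα
  obtain ⟨δ, hδ, l2⟩ := h2 β hβ
  exact ⟨δ, hδ, GoodEmb.to_le ((GoodEmb.of_le l1).comp (GoodEmb.of_le l2))⟩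

lemma le_lev {α σ : LPOF L} (h : α.le σ) : ∀ x ∈ α.N, levOf α.lt x = levOf σ.lt x :=
  fun x hx => levOf_restrict σ h.2.1 h.2.2.1 x hx

lemma goodEmb_levset_image {α γ : LPOF L} {f : ℕ → ℕ} (hf : GoodEmb α γ f)
    (hs : Set.SurjOn f α.N γ.N) (k : ℕ) :
    f '' {x ∈ α.N | levOf α.lt x = k} = {w ∈ γ.N | levOf γ.lt w = k} := by
  ext w
  constructor
  · rintro ⟨x, ⟨hx, hlev⟩, rfl⟩
    exact ⟨hf.maps hx, by rw [hf.lev_eq x hx]; exact hlev⟩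
  · rintro ⟨hw, hlev⟩
    obtain ⟨x, hx, rfl⟩ := hs hw
    exact ⟨x, ⟨hx, by rw [← hf.lev_eq x hx]; exact hlev⟩, rfl⟩

lemma iso_levset_ncard {α β : LPOF L} (h : α.iso β) (k : ℕ) :
    ({x ∈ α.N | levOf α.lt x = k}).ncard = ({x ∈ β.N | levOf β.lt x = k}).ncard := by
  obtain ⟨f, hf, hs⟩ := iso_goodEmb h
  rw [← goodEmb_levset_image hf hs k,
    Set.ncard_image_of_injOn (hf.inj.mono (fun x hx => hx.1))]

/-- rigidity: an infinite pomset below `S'` occupies full level-sets of `σ₀`. -/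
lemma infinite_rep_levset_ncard {C S' : Pom L} {σ₀ γ : LPOF L}
    (hσ : σ₀ ∈ S'.1) (hγ : γ ∈ C.1) (hinf : γ.N.Infinite) (hCS : pomLe C S') :
    ∀ k, ({x ∈ σ₀.N | levOf σ₀.lt x = k}).ncard
      = ({x ∈ γ.N | levOf γ.lt x = k}).ncard := by
  classical
  intro k
  obtain ⟨d⟩ := Set.countable_infinite_iff_nonempty_denumerable.mp
    ⟨γ.N.to_countable, hinf⟩
  letI := d
  set E : ↥γ.N ≃ ℕ := Denumerable.eqv ↥γ.N with hE
  set q : ℕ → ℕ := fun x => if hx : x ∈ γ.N then E ⟨x, hx⟩ else 0 with hqdef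
  have hq : Set.InjOn q γ.N := by
    intro a ha b hb he
    simp only [hqdef, dif_pos ha, dif_pos hb] at he
    have h2 : (⟨a, ha⟩ : ↥γ.N) = ⟨b, hb⟩ := E.injective he
    exact Subtype.ext_iff.mp h2
  have himg : q '' γ.N = Set.univ := by
    apply Set.eq_univ_of_forall
    intro m
    refine ⟨(E.symm m).1, (E.symm m).2, ?_⟩
    simp only [hqdef, dif_pos (E.symm m).2]
    rw [show (⟨(E.symm m).1, (E.symm m).2⟩ : ↥γ.N) = E.symm m from rfl]
    exact E.apply_symm_apply m
  set γ' := γ.renamed q hq with hγ'def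
  have hγ'mem : γ' ∈ C.1 := by
    rw [pom_eq_mkPom C hγ]
    exact renamed_mem_isoClass γ q hq
  have hγ'univ : γ'.N = Set.univ := himg
  obtain ⟨β, hβ, hle⟩ := hCS γ' hγ'mem
  have hβuniv : β.N = Set.univ := by
    apply Set.eq_univ_of_univ_subset
    rw [← hγ'univ]
    exact hle.1
  have hlt : γ'.lt = β.lt := by
    funext x y
    apply propext
    rw [hle.2.2.1 x y]
    constructor
    · rintro ⟨h, _, _⟩; exact h
    · intro h
      exact ⟨h, by rw [hγ'univ]; trivial, by rw [hγ'univ]; trivial⟩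
  have h1 : {x ∈ β.N | levOf β.lt x = k} = {x ∈ γ'.N | levOf γ'.lt x = k} := by
    rw [hlt, hβuniv, hγ'univ]
  calc ({x ∈ σ₀.N | levOf σ₀.lt x = k}).ncard
      = ({x ∈ β.N | levOf β.lt x = k}).ncard :=
        iso_levset_ncard (iso_of_mem_same hσ hβ) k
    _ = ({x ∈ γ'.N | levOf γ'.lt x = k}).ncard := by rw [h1]
    _ = ({x ∈ γ.N | levOf γ.lt x = k}).ncard :=
        (iso_levset_ncard (renamed_mem_isoClass γ q hq) k).symm

/-- the generic ultrafilter extraction principle -/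
lemma ultra_extract {ι : Type} (U : Ultrafilter ι) (τ : LPOF L) (hv : ι → ℕ → ℕ)
    (H : ℕ → ℕ) (hH : ∀ u ∈ τ.N, {i | hv i u = H u} ∈ U)
    (P : ℕ → Prop) (w k : ℕ)
    (A : Set ι) (hA : A ∈ U)
    (hAn : ∀ i ∈ A, ∃ u, P u ∧ u ∈ τ.N ∧ levOf τ.lt u = k ∧ hv i u = w) :
    ∃ u, P u ∧ u ∈ τ.N ∧ H u = w := by
  classical
  set uf : ι → ℕ := fun i =>
    if h : ∃ u, P u ∧ u ∈ τ.N ∧ levOf τ.lt u = k ∧ hv i u = w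
    then h.choose else 0 with hufdef
  have hufn : ∀ i ∈ A, P (uf i) ∧ uf i ∈ τ.N ∧ levOf τ.lt (uf i) = k ∧
      hv i (uf i) = w := by
    intro i hi
    have h := hAn i hi
    simp only [hufdef, dif_pos h]
    exact h.choose_spec
  have hufmem : {i | uf i ∈ {u ∈ τ.N | levOf τ.lt u = k}} ∈ U := by
    apply Filter.mem_of_superset hA
    intro i hi
    exact ⟨(hufn i hi).2.1, (hufn i hi).2.2.1⟩
  set u : ℕ := ULim U uf 0 with hudef
  have hueq : {i | uf i = u} ∈ U :=
    ULim_spec U 0 (ULim_exists_of_finite U (τ.finLevel k) hufmem)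
  obtain ⟨i₀, hi₀A, hi₀e⟩ := Ultrafilter.nonempty_of_mem (Filter.inter_mem hA hueq)
  have hu := hufn i₀ hi₀A
  rw [hi₀e] at hu
  refine ⟨u, hu.1, hu.2.1, ?_⟩
  have h1 : {i | hv i u = w} ∈ U := by
    apply Filter.mem_of_superset (Filter.inter_mem hA hueq)
    rintro i ⟨hiA, hie⟩
    have := (hufn i hiA).2.2.2
    rwa [hie] at this
  obtain ⟨i₁, hv1, hv2⟩ := Ultrafilter.nonempty_of_mem
    (Filter.inter_mem h1 (hH u hu.2.1))
  exact hv2.symm.trans hv1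

end LPOF
namespace LPOF

variable {L : Type} [LabelDCPO L]

/-- Direction 2: finite implies compact. -/
lemma finite_pomCompact {A : Pom L} (hA : PomFinite A) : pomCompact A := by
  classical
  intro D hDne hDdir S' hSup hAS
  obtain ⟨σ₀, hσ₀⟩ := exists_pom_rep S'
  obtain ⟨αA, hαA, hαAle⟩ := exists_rep_le hσ₀ hAS
  have hαAfin : αA.N.Finite := hA αA hαA
  -- index type and ultrafilter
  obtain ⟨C₀, hC₀⟩ := hDne
  haveI hne : Nonempty {C : Pom L // C ∈ D} := ⟨⟨C₀, hC₀⟩⟩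
  set ups : {C : Pom L // C ∈ D} → Set {C : Pom L // C ∈ D} :=
    fun i => {j | pomLe i.1 j.1} with hups
  have hupsdir : ∀ i j, ∃ k, ups k ⊆ ups i ∩ ups j := by
    intro i j
    obtain ⟨Ck, hCk, h1, h2⟩ := hDdir i.1 i.2 j.1 j.2
    exact ⟨⟨Ck, hCk⟩, fun l hl => ⟨pomLe_trans h1 hl, pomLe_trans h2 hl⟩⟩
  set F : Filter {C : Pom L // C ∈ D} :=
    { sets := {s | ∃ i, ups i ⊆ s}
      univ_sets := ⟨Classical.arbitrary _, Set.subset_univ _⟩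
      sets_of_superset := by rintro s t ⟨i, hi⟩ hst; exact ⟨i, hi.trans hst⟩
      inter_sets := by
        rintro s t ⟨i, hi⟩ ⟨j, hj⟩
        obtain ⟨k, hk⟩ := hupsdir i j
        exact ⟨k, fun l hl => ⟨hi (hk hl).1, hj (hk hl).2⟩⟩ } with hF
  haveI hFne : F.NeBot := by
    apply Filter.forall_mem_nonempty_iff_neBot.mp
    rintro s ⟨i, hi⟩
    exact ⟨i, hi (pomLe_refl i.1)⟩
  set U : Ultrafilter {C : Pom L // C ∈ D} := Ultrafilter.of F with hU
  have hUup : ∀ i, ups i ∈ U := fun i => Ultrafilter.of_le F ⟨i, subset_rfl⟩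
  -- canonical representatives inside σ₀
  have hreps : ∀ i : {C : Pom L // C ∈ D}, ∃ γ, γ ∈ (i.1).1 ∧ γ.le σ₀ := fun i =>
    exists_rep_le hσ₀ (hSup.1 i.1 i.2)
  set γf : {C : Pom L // C ∈ D} → LPOF L := fun i => (hreps i).choose with hγfdef
  have hγ : ∀ i, γf i ∈ (i.1).1 ∧ (γf i).le σ₀ := fun i => (hreps i).choose_spec
  have hlei : ∀ i, (γf i).le σ₀ := fun i => (hγ i).2
  have hroot : ∀ i, σ₀.root ∈ (γf i).N := by
    intro i
    have h := (GoodEmb.of_le (hlei i)).root_eq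
    simp only [id] at h
    exact h ▸ root_mem (γf i)
  have hltj : ∀ j, ∀ a b, (γf j).lt a b ↔ (σ₀.lt a b ∧ a ∈ (γf j).N ∧ b ∈ (γf j).N) :=
    fun j => (hlei j).2.2.1
  -- the U-limit sub-LPOF
  set Pρ : Set ℕ := {x ∈ σ₀.N | {i | x ∈ (γf i).N} ∈ U} with hPρ
  set lρ : ℕ → L := fun x => ULim U (fun i => (γf i).lab x) ⊥ with hlρ
  have hlabfin : ∀ x : ℕ, ({v : L | v ≤ σ₀.lab x}).Finite := by
    intro x
    apply Set.Finite.subset ((LabelDCPO.finitelyPreceded (σ₀.lab x)).insert (σ₀.lab x))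
    intro v hv
    rcases lt_or_eq_of_le hv with h | h
    · exact Set.mem_insert_iff.mpr (Or.inr h)
    · exact Set.mem_insert_iff.mpr (Or.inl h)
  have hlabmem : ∀ x ∈ Pρ, {i | (γf i).lab x ∈ {v : L | v ≤ σ₀.lab x}} ∈ U := by
    rintro x ⟨hxN, hxU⟩
    apply Filter.mem_of_superset hxU
    intro i hi
    exact (hlei i).2.2.2.1 x hi
  have hlabU : ∀ x ∈ Pρ, {i | (γf i).lab x = lρ x} ∈ U := by
    intro x hx
    exact ULim_spec U ⊥ (ULim_exists_of_finite U (hlabfin x) (hlabmem x hx))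
  have hlabuniq : ∀ x, ∀ v : L, {i | (γf i).lab x = v} ∈ U → lρ x = v := by
    intro x v hv
    exact ULim_eq U ⊥ hv
  have hρOK : SubOK σ₀ Pρ lρ := by
    refine ⟨fun x hx => hx.1, ?_, ?_, ?_⟩
    · rintro x ⟨hxN, hxU⟩ y hy
      refine ⟨(σ₀.lt_mem hy).1, ?_⟩
      apply Filter.mem_of_superset hxU
      intro i hi
      exact (hlei i).2.1 x hi y hy
    · exact ⟨σ₀.root, σ₀.root_mem, Filter.mem_of_superset Filter.univ_mem
        (fun i _ => hroot i)⟩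
    · rintro x hx hxbot y hy hlt
      obtain ⟨i, hie, hix, hiy⟩ := Ultrafilter.nonempty_of_mem
        (Filter.inter_mem (hlabU x hx) (Filter.inter_mem hx.2 hy.2))
      have hl : (γf i).lt x y := ((hltj i x y)).mpr ⟨hlt, hix, hiy⟩
      exact (γf i).bot_maximal x hix (hie.trans hxbot) y hl
  set ρ : LPOF L := subLPOF σ₀ Pρ lρ hρOK with hρdef
  have hρN : ρ.N = Pρ := rfl
  -- growth from each representative
  have hgrow : ∀ i, ∀ y ∈ σ₀.N, y ∉ (γf i).N → ∃ z, z ∈ (γf i).Bot ∧ σ₀.lt z y := by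
    intro i y hy hyi
    obtain ⟨z, hz, hzlt⟩ := (GoodEmb.of_le (hlei i)).growth y hy
      (fun u hu he => hyi (by rw [show id u = u from rfl] at he; exact he ▸ hu))
    exact ⟨z, hz, hzlt⟩
  have hcovU : ∀ x ∈ Pρ, ∀ y, σ₀.lt x y → y ∉ Pρ → ∃ z ∈ Pρ, lρ z = ⊥ ∧ σ₀.lt z y := by
    rintro x hx y hlt hyP
    have hyN : y ∈ σ₀.N := (σ₀.lt_mem hlt).2
    have hyU : {i | y ∈ (γf i).N}ᶜ ∈ U :=
      Ultrafilter.compl_mem_iff_notMem.mpr (fun hc => hyP ⟨hyN, hc⟩)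
    have hEU : ({i | x ∈ (γf i).N} ∩ {i | y ∈ (γf i).N}ᶜ) ∈ U :=
      Filter.inter_mem hx.2 hyU
    set zf : {C : Pom L // C ∈ D} → ℕ := fun i =>
      if h : ∃ z, z ∈ (γf i).Bot ∧ σ₀.lt z y then h.choose else 0 with hzf
    have hzfn : ∀ i ∈ ({i | x ∈ (γf i).N} ∩ {i | y ∈ (γf i).N}ᶜ),
        zf i ∈ (γf i).Bot ∧ σ₀.lt (zf i) y := by
      rintro i ⟨hix, hiy⟩
      have h : ∃ z, z ∈ (γf i).Bot ∧ σ₀.lt z y := hgrow i y hyN hiy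
      have he : zf i = h.choose := by simp only [hzf]; rw [dif_pos h]
      rw [he]
      exact h.choose_spec
    have hzmem : {i | zf i ∈ {z | σ₀.lt z y}} ∈ U :=
      Filter.mem_of_superset hEU (fun i hi => (hzfn i hi).2)
    have hzeq : {i | zf i = ULim U zf 0} ∈ U :=
      ULim_spec U 0 (ULim_exists_of_finite U (σ₀.finPred y) hzmem)
    have hElarge := Filter.inter_mem hEU hzeq
    obtain ⟨i₀, hi₀E, hi₀e⟩ := Ultrafilter.nonempty_of_mem hElarge
    have h0 := hzfn i₀ hi₀E
    rw [hi₀e] at h0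
    have hzP : ULim U zf 0 ∈ Pρ := by
      refine ⟨(σ₀.lt_mem h0.2).1, ?_⟩
      apply Filter.mem_of_superset hElarge
      rintro i ⟨hiE, hie⟩
      have := (hzfn i hiE).1
      rw [hie] at this
      exact Bot_subset_N this
    refine ⟨ULim U zf 0, hzP, ?_, h0.2⟩
    apply hlabuniq
    apply Filter.mem_of_superset hElarge
    rintro i ⟨hiE, hie⟩
    have := (hzfn i hiE).1
    rw [hie] at this
    exact this.2
  have hρle : ρ.le σ₀ := by
    apply subLPOF_le_base hρOK
    · intro x hx
      obtain ⟨i, hi1, hi2⟩ := Ultrafilter.nonempty_of_mem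
        (Filter.inter_mem (hlabU x hx) (hlabmem x hx))
      rw [← hi1]
      exact hi2
    · exact hcovU
  -- embeddings between representatives
  have hembs : ∀ i j, pomLe i.1 j.1 → ∃ h, GoodEmb (γf i) (γf j) h := by
    intro i j hij
    obtain ⟨β, hβ, hle⟩ := hij (γf i) (hγ i).1
    obtain ⟨e, he, _⟩ := iso_goodEmb (iso_of_mem_same hβ (hγ j).1)
    exact ⟨e ∘ id, (GoodEmb.of_le hle).comp he⟩
  set hmap : {C : Pom L // C ∈ D} → {C : Pom L // C ∈ D} → (ℕ → ℕ) := fun i j =>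
    if h : pomLe i.1 j.1 then (hembs i j h).choose else id with hmapdef
  have hmapG : ∀ i j, (h : pomLe i.1 j.1) → GoodEmb (γf i) (γf j) (hmap i j) := by
    intro i j h
    have he : hmap i j = (hembs i j h).choose := by simp only [hmapdef]; rw [dif_pos h]
    rw [he]
    exact (hembs i j h).choose_spec
  have hlevi : ∀ i, ∀ x ∈ (γf i).N, levOf (γf i).lt x = levOf σ₀.lt x :=
    fun i => le_lev (hlei i)
  -- upper bound property
  have hUBi : ∀ i : {C : Pom L // C ∈ D}, pomLe i.1 (mkPom ρ) := by
    intro i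
    set Hi : ℕ → ℕ := fun x => ULim U (fun j => hmap i j x) 0 with hHidef
    have hmem1 : ∀ x ∈ (γf i).N, {j | hmap i j x ∈
        {w ∈ σ₀.N | levOf σ₀.lt w = levOf σ₀.lt x}} ∈ U := by
      intro x hx
      apply Filter.mem_of_superset (hUup i)
      intro j hj
      have hG := hmapG i j hj
      have h1 : hmap i j x ∈ (γf j).N := hG.maps hx
      refine ⟨(hlei j).1 h1, ?_⟩
      rw [← hlevi j _ h1, hG.lev_eq x hx, hlevi i x hx]
    have hHiU : ∀ x ∈ (γf i).N, {j | hmap i j x = Hi x} ∈ U := by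
      intro x hx
      exact ULim_spec U 0 (ULim_exists_of_finite U (σ₀.finLevel _) (hmem1 x hx))
    have hHilev : ∀ x ∈ (γf i).N, Hi x ∈ σ₀.N ∧ levOf σ₀.lt (Hi x) = levOf σ₀.lt x :=
      fun x hx => ULim_mem U (σ₀.finLevel _) 0 (hmem1 x hx)
    have hHiP : ∀ x ∈ (γf i).N, Hi x ∈ Pρ := by
      intro x hx
      refine ⟨(hHilev x hx).1, ?_⟩
      apply Filter.mem_of_superset (Filter.inter_mem (hUup i) (hHiU x hx))
      rintro j ⟨hj, hje⟩
      rw [← hje]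
      exact (hmapG i j hj).maps hx
    have hGood : GoodEmb (γf i) ρ Hi := by
      refine ⟨?_, hHiP, ?_, ?_, ?_, ?_, ?_⟩
      · -- inj
        intro x hx y hy he
        obtain ⟨j, hji, hjx, hjy⟩ := Ultrafilter.nonempty_of_mem (Filter.inter_mem (hUup i)
          (Filter.inter_mem (hHiU x hx) (hHiU y hy)))
        apply (hmapG i j hji).inj hx hy
        rw [hjx, hjy, he]
      · -- ltIff
        intro x hx y hy
        obtain ⟨j, hji, hjx, hjy⟩ := Ultrafilter.nonempty_of_mem (Filter.inter_mem (hUup i)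
          (Filter.inter_mem (hHiU x hx) (hHiU y hy)))
        have hG := hmapG i j hji
        constructor
        · intro hlt
          have h1 := (hG.ltIff x hx y hy).mp hlt
          have h2 : σ₀.lt (hmap i j x) (hmap i j y) := ((hltj j _ _).mp h1).1
          rw [hjx, hjy] at h2
          exact ⟨h2, hHiP x hx, hHiP y hy⟩
        · rintro ⟨hlt, _, _⟩
          rw [← hjx, ← hjy] at hlt
          exact (hG.ltIff x hx y hy).mpr ((hltj j _ _).mpr ⟨hlt, hG.maps hx, hG.maps hy⟩)
      · -- dc
        intro x hx w hw
        obtain ⟨hwσ, hwP, _⟩ := hw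
        have hA : ({j | pomLe i.1 j.1} ∩ ({j | hmap i j x = Hi x} ∩
            {j | w ∈ (γf j).N})) ∈ U :=
          Filter.inter_mem (hUup i) (Filter.inter_mem (hHiU x hx) hwP.2)
        obtain ⟨u, _, huN, hue⟩ := ultra_extract U (γf i) (hmap i) Hi hHiU
          (fun _ => True) w (levOf σ₀.lt w) _ hA (by
            rintro j ⟨hji, hjx, hjw⟩
            have hG := hmapG i j hji
            have h1 : (γf j).lt w (hmap i j x) := (hltj j _ _).mpr
              ⟨by rw [hjx]; exact hwσ, hjw, hG.maps hx⟩
            obtain ⟨u, hu, hue⟩ := hG.dc x hx w h1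
            refine ⟨u, trivial, hu, ?_, hue⟩
            rw [← hG.lev_eq u hu, hue, hlevi j w hjw])
        exact ⟨u, huN, hue⟩
      · -- lab
        intro x hx
        have hHP := hHiP x hx
        obtain ⟨j, hji, hjx, hje⟩ := Ultrafilter.nonempty_of_mem (Filter.inter_mem (hUup i)
          (Filter.inter_mem (hHiU x hx) (hlabU _ hHP)))
        have h1 := (hmapG i j hji).lab x hx
        rw [hjx] at h1
        rw [show ρ.lab (Hi x) = lρ (Hi x) from subLPOF_lab hρOK hHP, ← hje]
        exact h1
      · -- form
        intro x hx
        have hHP := hHiP x hx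
        have hvars : ∀ v ∈ ((γf i).form x).vars, v ∈ (γf i).N := vars_subset_N _ hx
        have hbig : ({j | pomLe i.1 j.1} ∩ ({j | hmap i j x = Hi x} ∩
            (⋂ v ∈ ((γf i).form x).vars, {j | hmap i j v = Hi v}))) ∈ U := by
          refine Filter.inter_mem (hUup i) (Filter.inter_mem (hHiU x hx) ?_)
          rw [Filter.biInter_mem (Form.vars_finite _)]
          intro v hv
          exact hHiU v (hvars v hv)
        obtain ⟨j, hji, hjx, hjv⟩ := Ultrafilter.nonempty_of_mem hbig
        simp only [Set.mem_iInter, Set.mem_setOf_eq] at hjv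
        have hG := hmapG i j hji
        have hmemj : Hi x ∈ (γf j).N := by rw [← hjx]; exact hG.maps hx
        have h2 : ρ.form (Hi x) = σ₀.form (Hi x) := subLPOF_form hρOK hHP
        have h3 : σ₀.form (Hi x) = (γf j).form (Hi x) :=
          ((hlei j).2.2.2.2.1 (Hi x) hmemj).symm
        rw [h2, h3, ← hjx, hG.form x hx]
        apply Form.rename_congr
        intro v hv
        exact hjv v hv
      · -- succs
        intro x hx
        have hHPx := hHiP x hx
        have hsuccρ : ρ.succs (Hi x) = σ₀.succs (Hi x) ∩ Pρ := subLPOF_succs hρOK hHPx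
        ext w
        constructor
        · rintro ⟨y, hy, rfl⟩
          have hyN : y ∈ (γf i).N := succs_subset_N hy
          constructor
          · rw [hsuccρ]
            refine ⟨?_, hHiP y hyN⟩
            obtain ⟨j, hji, hjx, hjy⟩ := Ultrafilter.nonempty_of_mem
              (Filter.inter_mem (hUup i) (Filter.inter_mem (hHiU x hx) (hHiU y hyN)))
            have hG := hmapG i j hji
            have h1 : hmap i j y ∈ (hmap i j) '' ((γf i).succs x) := ⟨y, hy, rfl⟩
            rw [hG.succs x hx] at h1
            have h2 := h1.1
            rw [(hlei j).2.2.2.2.2 _ (hG.maps hx)] at h2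
            have h4 := h2.1
            rw [hjx, hjy] at h4
            exact h4
          · rintro ⟨z', ⟨b, hb, rfl⟩, hzlt⟩
            obtain ⟨hσlt, _, _⟩ := hzlt
            have hbN := Bot_subset_N hb
            obtain ⟨j, hji, hjb, hjy⟩ := Ultrafilter.nonempty_of_mem
              (Filter.inter_mem (hUup i) (Filter.inter_mem (hHiU b hbN) (hHiU y hyN)))
            have hG := hmapG i j hji
            rw [← hjb, ← hjy] at hσlt
            have h5 : (γf j).lt (hmap i j b) (hmap i j y) :=
              (hltj j _ _).mpr ⟨hσlt, hG.maps hbN, hG.maps hyN⟩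
            exact Bot_maximal hb y ((hG.ltIff b hbN y hyN).mpr h5)
        · rintro ⟨hw1, hw2⟩
          rw [hsuccρ] at hw1
          obtain ⟨hwsucc, hwP⟩ := hw1
          set Aset := {j | (∃ u, u ∈ (γf i).succs x ∧
              (hmap i j u = w ∨ σ₀.lt (hmap i j u) w)) ∧ pomLe i.1 j.1} with hAsetdef
          set Bset := {j | (∃ b, b ∈ (γf i).Bot ∧ σ₀.lt (hmap i j b) w) ∧ pomLe i.1 j.1}
            with hBsetdef
          have hcover : ({j | pomLe i.1 j.1} ∩ ({j | hmap i j x = Hi x} ∩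
              {j | w ∈ (γf j).N})) ⊆ Aset ∪ Bset := by
            rintro j ⟨hji, hjx, hjw⟩
            have hG := hmapG i j hji
            have hxj : hmap i j x ∈ (γf j).N := hG.maps hx
            have hltxw : (γf j).lt (hmap i j x) w := (hltj j _ _).mpr
              ⟨by rw [hjx]; exact hwsucc.1, hxj, hjw⟩
            obtain ⟨v₀, hv₀, hv₀w⟩ := (γf j).exists_succs_between hltxw
            by_cases hcase : v₀ ∈ (γf j).succPlus ((hmap i j) '' (γf i).Bot)
            · right
              obtain ⟨b', ⟨b, hb, rfl⟩, hblt⟩ := hcase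
              refine ⟨⟨b, hb, ?_⟩, hji⟩
              have hσ1 : σ₀.lt (hmap i j b) v₀ := ((hltj j _ _).mp hblt).1
              rcases hv₀w with h | h
              · rwa [h] at hσ1
              · exact σ₀.lt_trans hσ1 ((hltj j _ _).mp h).1
            · left
              have h7 : v₀ ∈ (hmap i j) '' ((γf i).succs x) := by
                rw [hG.succs x hx]; exact ⟨hv₀, hcase⟩
              obtain ⟨u, hu, rfl⟩ := h7
              refine ⟨⟨u, hu, ?_⟩, hji⟩
              rcases hv₀w with h | h
              · left; exact h
              · right; exact ((hltj j _ _).mp h).1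
          have hABU : Aset ∪ Bset ∈ U := Filter.mem_of_superset
            (Filter.inter_mem (hUup i) (Filter.inter_mem (hHiU x hx) hwP.2)) hcover
          have hBnot : Bset ∉ U := by
            intro hBU
            set pf : {C : Pom L // C ∈ D} → ℕ := fun j =>
              if h : ∃ b, b ∈ (γf i).Bot ∧ σ₀.lt (hmap i j b) w
              then hmap i j h.choose else 0 with hpfdef
            have hpfn : ∀ j ∈ Bset, (∃ b, b ∈ (γf i).Bot ∧ hmap i j b = pf j) ∧
                σ₀.lt (pf j) w := by
              rintro j ⟨hj, hji⟩
              have he : pf j = hmap i j hj.choose := by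
                simp only [hpfdef]; rw [dif_pos hj]
              rw [he]
              exact ⟨⟨hj.choose, hj.choose_spec.1, rfl⟩, hj.choose_spec.2⟩
            have hpmem : {j | pf j ∈ {z | σ₀.lt z w}} ∈ U :=
              Filter.mem_of_superset hBU (fun j hj => (hpfn j hj).2)
            have hzeq : {j | pf j = ULim U pf 0} ∈ U :=
              ULim_spec U 0 (ULim_exists_of_finite U (σ₀.finPred w) hpmem)
            have hA2 : Bset ∩ {j | pf j = ULim U pf 0} ∈ U := Filter.inter_mem hBU hzeq
            obtain ⟨j₀, hj₀B, hj₀e⟩ := Ultrafilter.nonempty_of_mem hA2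
            have hzlt : σ₀.lt (ULim U pf 0) w := by
              have := (hpfn j₀ hj₀B).2
              rwa [hj₀e] at this
            obtain ⟨b, hbBot, hbN, hbe⟩ := ultra_extract U (γf i) (hmap i) Hi hHiU
              (fun b => b ∈ (γf i).Bot) (ULim U pf 0) (levOf σ₀.lt (ULim U pf 0)) _ hA2
              (by
                rintro j ⟨hjB, hjz⟩
                obtain ⟨⟨b, hb, hbe⟩, _⟩ := hpfn j hjB
                have hbN := Bot_subset_N hb
                have hG := hmapG i j hjB.2
                refine ⟨b, hb, hbN, ?_, by rw [hbe, hjz]⟩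
                rw [← hG.lev_eq b hbN, hbe, hjz]
                have hzj : pf j ∈ (γf j).N := by
                  rw [← hbe]; exact hG.maps hbN
                rw [← hjz]
                exact hlevi j _ hzj)
            apply hw2
            refine ⟨Hi b, ⟨b, hbBot, rfl⟩, ?_⟩
            rw [hbe]
            exact ⟨hzlt, by rw [← hbe]; exact hHiP b hbN, hwP⟩
          have hAU : Aset ∈ U := by
            rcases Ultrafilter.union_mem_iff.mp hABU with h | h
            · exact h
            · exact absurd h hBnot
          set vf : {C : Pom L // C ∈ D} → ℕ := fun j =>
            if h : ∃ u, u ∈ (γf i).succs x ∧ (hmap i j u = w ∨ σ₀.lt (hmap i j u) w)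
            then hmap i j h.choose else 0 with hvfdef
          have hvfn : ∀ j ∈ Aset, (∃ u, u ∈ (γf i).succs x ∧ hmap i j u = vf j) ∧
              (vf j = w ∨ σ₀.lt (vf j) w) := by
            rintro j ⟨hj, hji⟩
            have he : vf j = hmap i j hj.choose := by
              simp only [hvfdef]; rw [dif_pos hj]
            rw [he]
            refine ⟨⟨hj.choose, hj.choose_spec.1, rfl⟩, hj.choose_spec.2⟩
          have hvmem : {j | vf j ∈ insert w {z | σ₀.lt z w}} ∈ U := by
            apply Filter.mem_of_superset hAU
            intro j hj
            rcases (hvfn j hj).2 with h | h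
            · exact Set.mem_insert_iff.mpr (Or.inl h)
            · exact Set.mem_insert_iff.mpr (Or.inr h)
          have hveq : {j | vf j = ULim U vf 0} ∈ U :=
            ULim_spec U 0 (ULim_exists_of_finite U ((σ₀.finPred w).insert w) hvmem)
          have hA3 : Aset ∩ {j | vf j = ULim U vf 0} ∈ U := Filter.inter_mem hAU hveq
          obtain ⟨j₁, hj₁A, hj₁e⟩ := Ultrafilter.nonempty_of_mem hA3
          have hvw : ULim U vf 0 = w ∨ σ₀.lt (ULim U vf 0) w := by
            have := (hvfn j₁ hj₁A).2
            rwa [hj₁e] at this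
          obtain ⟨u, huS, huN, hue⟩ := ultra_extract U (γf i) (hmap i) Hi hHiU
            (fun u => u ∈ (γf i).succs x) (ULim U vf 0) (levOf σ₀.lt (ULim U vf 0)) _ hA3
            (by
              rintro j ⟨hjA, hjv⟩
              obtain ⟨⟨u, hu, hue'⟩, _⟩ := hvfn j hjA
              have huN := succs_subset_N hu
              have hG := hmapG i j hjA.2
              refine ⟨u, hu, huN, ?_, by rw [hue', hjv]⟩
              rw [← hG.lev_eq u huN, hue', hjv]
              have hvj : vf j ∈ (γf j).N := by
                rw [← hue']; exact hG.maps huN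
              rw [← hjv]
              exact hlevi j _ hvj)
          rcases hvw with h | h
          · exact ⟨u, huS, hue.trans h⟩
          · exfalso
            -- σ₀.lt (Hi x) v and σ₀.lt v w contradict immediacy of w over Hi x
            have hltv : σ₀.lt (Hi x) (ULim U vf 0) := by
              obtain ⟨j, hji, hjx, hju⟩ := Ultrafilter.nonempty_of_mem
                (Filter.inter_mem (hUup i) (Filter.inter_mem (hHiU x hx) (hHiU u huN)))
              have hG := hmapG i j hji
              have h8 : (γf j).lt (hmap i j x) (hmap i j u) :=
                (hG.ltIff x hx u huN).mp (succs_lt huS)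
              have h9 := ((hltj j _ _).mp h8).1
              rw [hjx, hju, hue] at h9
              exact h9
            exact hwsucc.2 ⟨ULim U vf 0, hltv, h⟩
    have hroom : (γf i).N.Finite ∨ Set.SurjOn Hi (γf i).N ρ.N := by
      by_cases hfin : (γf i).N.Finite
      · exact Or.inl hfin
      · right
        have hncard := infinite_rep_levset_ncard hσ₀ (hγ i).1 hfin (hSup.1 i.1 i.2)
        intro w hw
        have hwP : w ∈ Pρ := hw
        set k := levOf σ₀.lt w with hkdef
        have hsets : {x ∈ (γf i).N | levOf (γf i).lt x = k}
            = {x ∈ (γf i).N | levOf σ₀.lt x = k} := by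
          ext x
          constructor
          · rintro ⟨h1, h2⟩; exact ⟨h1, by rw [← hlevi i x h1]; exact h2⟩
          · rintro ⟨h1, h2⟩; exact ⟨h1, by rw [hlevi i x h1]; exact h2⟩
        have himg : Hi '' {x ∈ (γf i).N | levOf σ₀.lt x = k} = {v ∈ Pρ | levOf σ₀.lt v = k} := by
          apply Set.eq_of_subset_of_ncard_le
          · rintro v ⟨x, ⟨hx, hlev⟩, rfl⟩
            exact ⟨hHiP x hx, by rw [(hHilev x hx).2]; exact hlev⟩
          · have hinj : Set.InjOn Hi {x ∈ (γf i).N | levOf σ₀.lt x = k} :=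
              hGood.inj.mono (fun x hx => hx.1)
            rw [Set.ncard_image_of_injOn hinj]
            calc ({v ∈ Pρ | levOf σ₀.lt v = k}).ncard
                ≤ ({v ∈ σ₀.N | levOf σ₀.lt v = k}).ncard := by
                  apply Set.ncard_le_ncard
                  · rintro v ⟨hv, hl⟩; exact ⟨hρOK.1 hv, hl⟩
                  · exact σ₀.finLevel k
              _ = ({x ∈ (γf i).N | levOf (γf i).lt x = k}).ncard := hncard k
              _ = ({x ∈ (γf i).N | levOf σ₀.lt x = k}).ncard := by rw [hsets]
          · apply Set.Finite.subset (σ₀.finLevel k)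
            rintro v ⟨hv, hl⟩
            exact ⟨hρOK.1 hv, hl⟩
        have hwin : w ∈ {v ∈ Pρ | levOf σ₀.lt v = k} := ⟨hwP, rfl⟩
        rw [← himg] at hwin
        obtain ⟨x, ⟨hx, _⟩, rfl⟩ := hwin
        exact ⟨x, hx, rfl⟩
    exact pomLe_of_goodEmb' (hγ i).1 (mem_mkPom ρ) hGood hroom
  -- ρ is an upper bound, so S' ⊑ ρ by leastness
  have hρUB : isUB pomLe D (mkPom ρ) := fun C hC => hUBi ⟨C, hC⟩
  obtain ⟨β, hβ, hσle⟩ := (hSup.2 (mkPom ρ) hρUB) σ₀ hσ₀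
  obtain ⟨e, he, _⟩ := iso_goodEmb (iso_of_mem_same hβ (mem_mkPom ρ))
  have hGE : GoodEmb σ₀ ρ (e ∘ id) := (GoodEmb.of_le hσle).comp he
  set G : ℕ → ℕ := e ∘ id with hGdef
  have hGm : ∀ x ∈ σ₀.N, G x ∈ Pρ := fun x hx => hGE.maps hx
  have hGmN : ∀ x ∈ σ₀.N, G x ∈ σ₀.N := fun x hx => hρOK.1 (hGm x hx)
  have hGlev : ∀ x ∈ σ₀.N, levOf σ₀.lt (G x) = levOf σ₀.lt x := by
    intro x hx
    rw [← subLPOF_lev hρOK (hGm x hx)]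
    exact hGE.lev_eq x hx
  have hGonto : ∀ k, G '' {x ∈ σ₀.N | levOf σ₀.lt x = k}
      = {x ∈ σ₀.N | levOf σ₀.lt x = k} := by
    intro k
    apply Set.eq_of_subset_of_ncard_le
    · rintro v ⟨x, ⟨hx, hl⟩, rfl⟩
      exact ⟨hGmN x hx, by rw [hGlev x hx]; exact hl⟩
    · rw [Set.ncard_image_of_injOn (hGE.inj.mono (fun x hx => hx.1))]
    · exact σ₀.finLevel k
  have hGlab : ∀ x ∈ σ₀.N, σ₀.lab x ≤ ρ.lab (G x) ∧ ρ.lab (G x) ≤ σ₀.lab (G x) :=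
    fun x hx => ⟨hGE.lab x hx, hρle.2.2.2.1 (G x) (hGm x hx)⟩
  -- orbits are finite, labels stabilise
  have hGiter : ∀ m, Set.MapsTo (G^[m]) σ₀.N σ₀.N ∧ Set.InjOn (G^[m]) σ₀.N := by
    intro m
    induction m with
    | zero => exact ⟨fun x hx => by simpa using hx, fun x _ y _ h => by simpa using h⟩
    | succ p ih =>
        rw [Function.iterate_succ']
        exact ⟨fun x hx => hGmN _ (ih.1 hx), hGE.inj.comp ih.2 ih.1⟩
  have hGfix : ∀ x ∈ σ₀.N, ρ.lab (G x) = σ₀.lab x ∧ σ₀.lab (G x) = σ₀.lab x := by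
    intro x hx
    have hmem : ∀ m, G^[m] x ∈ {y ∈ σ₀.N | levOf σ₀.lt y = levOf σ₀.lt x} := by
      intro m
      induction m with
      | zero => rw [Function.iterate_zero_apply]; exact ⟨hx, rfl⟩
      | succ p ih =>
          rw [Function.iterate_succ_apply']
          exact ⟨hGmN _ ih.1, by rw [hGlev _ ih.1]; exact ih.2⟩
    haveI : Finite ↥{y ∈ σ₀.N | levOf σ₀.lt y = levOf σ₀.lt x} :=
      (σ₀.finLevel _).to_subtype
    obtain ⟨m1, m2, hne12, heq⟩ := Finite.exists_ne_map_eq_of_infinite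
      (fun m : ℕ => (⟨G^[m] x, hmem m⟩ : ↥{y ∈ σ₀.N | levOf σ₀.lt y = levOf σ₀.lt x}))
    have heq' : G^[m1] x = G^[m2] x := Subtype.ext_iff.mp heq
    have hper : ∃ t, 1 ≤ t ∧ G^[t] x = x := by
      rcases Nat.lt_or_ge m1 m2 with h | h
      · refine ⟨m2 - m1, by omega, ?_⟩
        have h1 : G^[m1] (G^[m2 - m1] x) = G^[m1] x := by
          rw [← Function.iterate_add_apply, show m1 + (m2 - m1) = m2 by omega, heq']
        exact (hGiter m1).2 ((hGiter (m2 - m1)).1 hx) hx h1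
      · have h' : m2 < m1 := by omega
        refine ⟨m1 - m2, by omega, ?_⟩
        have h1 : G^[m2] (G^[m1 - m2] x) = G^[m2] x := by
          rw [← Function.iterate_add_apply, show m2 + (m1 - m2) = m1 by omega, heq']
        exact (hGiter m2).2 ((hGiter (m1 - m2)).1 hx) hx h1
    obtain ⟨t, ht1, hteq⟩ := hper
    set b : ℕ → L := fun m => σ₀.lab (G^[m] x) with hbdef
    have hmono : Monotone b := by
      apply monotone_nat_of_le_succ
      intro m
      show σ₀.lab (G^[m] x) ≤ σ₀.lab (G^[m+1] x)
      rw [Function.iterate_succ_apply']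
      exact le_trans (hGlab _ (hmem m).1).1 (hGlab _ (hmem m).1).2
    have hbt : b t = b 0 := by
      show σ₀.lab (G^[t] x) = σ₀.lab (G^[0] x)
      rw [hteq]
      simp
    have h01 : b 0 = b 1 := le_antisymm (hmono (Nat.zero_le 1))
      (by rw [← hbt]; exact hmono ht1)
    have hb1 : σ₀.lab (G x) = σ₀.lab x := by
      have : b 1 = σ₀.lab (G x) := by
        show σ₀.lab (G^[1] x) = σ₀.lab (G x)
        simp
      rw [← this, ← h01]
      rfl
    refine ⟨?_, hb1⟩
    apply le_antisymm
    · rw [← hb1]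
      exact (hGlab x hx).2
    · exact (hGlab x hx).1
  have hfull : ∀ y ∈ σ₀.N, y ∈ Pρ ∧ lρ y = σ₀.lab y := by
    intro y hy
    have hyin : y ∈ G '' {x ∈ σ₀.N | levOf σ₀.lt x = levOf σ₀.lt y} := by
      rw [hGonto]
      exact ⟨hy, rfl⟩
    obtain ⟨x, ⟨hx, _⟩, rfl⟩ := hyin
    have h1 := hGfix x hx
    refine ⟨hGm x hx, ?_⟩
    rw [show lρ (G x) = ρ.lab (G x) from (subLPOF_lab hρOK (hGm x hx)).symm, h1.1, ← h1.2]
  have hattain : ∀ x ∈ σ₀.N, {i | x ∈ (γf i).N ∧ (γf i).lab x = σ₀.lab x} ∈ U := by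
    intro x hx
    have h1 := hfull x hx
    apply Filter.mem_of_superset (Filter.inter_mem h1.1.2 (hlabU x h1.1))
    rintro i ⟨hi1, hi2⟩
    exact ⟨hi1, by rw [hi2, h1.2]⟩
  have hbig : (⋂ x ∈ αA.N, {i | x ∈ (γf i).N ∧ (γf i).lab x = σ₀.lab x}) ∈ U := by
    exact (Filter.biInter_mem hαAfin).mpr (fun x hx => hattain x (hαAle.1 hx))
  obtain ⟨i, hi⟩ := Ultrafilter.nonempty_of_mem hbig
  simp only [Set.mem_iInter, Set.mem_setOf_eq] at hi
  have hfinal : αA.le (γf i) := by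
    refine ⟨fun x hx => (hi x hx).1, ?_, ?_, ?_, ?_, ?_⟩
    · intro x hx y hy
      exact hαAle.2.1 x hx y ((hltj i y x).mp hy).1
    · intro x y
      constructor
      · intro h
        have hx := (αA.lt_mem h).1
        have hy := (αA.lt_mem h).2
        have hσ := ((hαAle.2.2.1 x y).mp h).1
        exact ⟨(hltj i x y).mpr ⟨hσ, (hi x hx).1, (hi y hy).1⟩, hx, hy⟩
      · rintro ⟨hlt, hx, hy⟩
        exact (hαAle.2.2.1 x y).mpr ⟨((hltj i x y).mp hlt).1, hx, hy⟩
    · intro x hx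
      rw [(hi x hx).2]
      exact hαAle.2.2.2.1 x hx
    · intro x hx
      rw [(hlei i).2.2.2.2.1 x (hi x hx).1]
      exact hαAle.2.2.2.2.1 x hx
    · intro x hx
      have E1 := hαAle.2.2.2.2.2 x hx
      have E2 := (hlei i).2.2.2.2.2 x (hi x hx).1
      ext y
      constructor
      · intro hy
        have hyA : y ∈ αA.N := succs_subset_N hy
        rw [E1] at hy
        obtain ⟨hy1, hy2⟩ := hy
        constructor
        · rw [E2]
          refine ⟨hy1, ?_⟩
          rintro ⟨z, hzB, hzlt⟩
          have hzA : z ∈ αA.N := hαAle.2.1 y hyA z hzlt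
          have hzbot : σ₀.lab z = ⊥ := by rw [← (hi z hzA).2]; exact hzB.2
          exact σ₀.bot_maximal z (hαAle.1 hzA) hzbot y hzlt
        · rintro ⟨z, hzB, hzlt⟩
          exact hy2 ⟨z, hzB, ((hltj i z y).mp hzlt).1⟩
      · rintro ⟨hy1, hy2⟩
        have hyγ : y ∈ (γf i).N := succs_subset_N hy1
        rw [E2] at hy1
        rw [E1]
        refine ⟨hy1.1, ?_⟩
        rintro ⟨z, hzB, hzlt⟩
        apply hy2
        exact ⟨z, hzB, (hltj i z y).mpr ⟨hzlt, (hi z (Bot_subset_N hzB)).1, hyγ⟩⟩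
  exact ⟨i.1, i.2, pomLe_of_goodEmb' hαA (hγ i).1 (GoodEmb.of_le hfinal) (Or.inl hαAfin)⟩


end LPOF
/-- the compact elements of Pom(L) are exactly the finite pomsets. -/
theorem stmt15 {L : Type} [LabelDCPO L] :
    {A : Pom L | pomCompact A} = {A : Pom L | PomFinite A} := by
  ext A
  exact ⟨fun h => LPOF.pomCompact_finite h, fun h => LPOF.finite_pomCompact h⟩
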